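/- arXiv:1008.5143 — 5 statements merged into one kernel-verified Lean document; each statement's English description precedes it below -/
import Mathlib

section
/- Let n ∈ ℕ, 1 ≤ k ≤ n, and let f : [0,1] → [0,1] be monotone increasing. Then the following are equivalent. (i) For every measurable space X, every probability measure P on X and every Markov kernel K from X to [0,1] which is a P-kernel for P, the Markov kernel K_{n,k,f} from X to [0,1], defined by letting K_{n,k,f}(x,·) be the pushforward of the n-fold product measure K(x,·)^{⊗n} on [0,1]^n under the map f ∘ U_{k:n}, is again a P-kernel for P. (ii) f(u) ≥ f_{n,k}(u) for every u ∈ [0,1]. -/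
open MeasureTheory ProbabilityTheory

/-- Binomial upper tail `B_{n,p}({k,…,n})`. -/
noncomputable def binTail (n k : ℕ) (p : ℝ) : ℝ :=
  ∑ j ∈ Finset.Icc k n, (n.choose j : ℝ) * p ^ j * (1 - p) ^ (n - j)

/-- `ψ_{n,k}(p) = p⁻¹ B_{n,p}({k,…,n})`, extended continuously at `0`. -/
noncomputable def psi (n k : ℕ) (p : ℝ) : ℝ :=
  if p = 0 then (if k = 1 then (n : ℝ) else 0) else p⁻¹ * binTail n k p

/-- `f_{n,k}(u) = u ⋅ sup_{p ∈ [u,1]} ψ_{n,k}(p)`. -/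
noncomputable def fnk (n k : ℕ) (u : ℝ) : ℝ := u * sSup (psi n k '' Set.Icc u 1)

/-- The `k`-th order statistic (k-th smallest coordinate) of `u : Fin n → α`,
with default value `d` (irrelevant for `1 ≤ k ≤ n`). -/
noncomputable def orderStat {α : Type*} [LinearOrder α] {n : ℕ} (k : ℕ) (u : Fin n → α)
    (d : α) : α :=
  ((Multiset.map u Finset.univ.val).sort (· ≤ ·)).getD (k - 1) d


set_option linter.unusedSectionVars false
set_option linter.unusedVariables false
set_option maxHeartbeats 1000000

open Finset Set
open scoped Classical ENNReal

/-- derivative of the binomial tail -/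
noncomputable def Dbt (n k : ℕ) (p : ℝ) : ℝ :=
  (k : ℝ) * (n.choose k : ℝ) * p ^ (k - 1) * (1 - p) ^ (n - k)

lemma natA (n j : ℕ) (hj1 : 1 ≤ j) (hn : j ≤ n) :
    n * (n-1).choose (j-1) = j * n.choose j := by
  obtain ⟨m, rfl⟩ := Nat.exists_eq_succ_of_ne_zero (by omega : n ≠ 0)
  obtain ⟨i, rfl⟩ := Nat.exists_eq_succ_of_ne_zero (by omega : j ≠ 0)
  simp only [Nat.succ_eq_add_one, Nat.add_sub_cancel]
  have := Nat.add_one_mul_choose_eq m i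
  rw [this]; ring

lemma natB (n j : ℕ) (hn : 1 ≤ n) :
    n * (n-1).choose j = n.choose j * (n - j) := by
  rcases Nat.lt_or_ge j n with hlt | hge
  · obtain ⟨m, rfl⟩ := Nat.exists_eq_succ_of_ne_zero (by omega : n ≠ 0)
    simp only [Nat.succ_eq_add_one, Nat.add_sub_cancel]
    have h1 := Nat.add_one_mul_choose_eq m j
    rw [h1, Nat.choose_succ_right_eq]
  · rw [Nat.choose_eq_zero_of_lt (by omega : n - 1 < j), Nat.sub_eq_zero_of_le hge]
    simp

/-- telescoping helper -/
noncomputable def ubt (n : ℕ) (p : ℝ) (j : ℕ) : ℝ :=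
  (n : ℝ) * ((n-1).choose (j-1) : ℝ) * p ^ (j-1) * (1-p) ^ (n-j)

lemma hasDerivAt_binTail (n k : ℕ) (hk1 : 1 ≤ k) (hkn : k ≤ n) (p : ℝ) :
    HasDerivAt (binTail n k) (Dbt n k p) p := by
  have hn1 : 1 ≤ n := hk1.trans hkn
  have hterm : ∀ j ∈ Finset.Icc k n,
      HasDerivAt (fun q : ℝ => (n.choose j : ℝ) * q ^ j * (1 - q) ^ (n - j))
        (ubt n p j - ubt n p (j+1)) p := by
    intro j hj
    simp only [Finset.mem_Icc] at hj
    have hj1 : 1 ≤ j := hk1.trans hj.1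
    have hjn : j ≤ n := hj.2
    have h1 : HasDerivAt (fun q : ℝ => q ^ j) ((j:ℝ) * p ^ (j-1)) p := hasDerivAt_pow j p
    have hinner : HasDerivAt (fun q : ℝ => 1 - q) (-1) p := by
      simpa using (hasDerivAt_id' p).const_sub (1:ℝ)
    have h2 : HasDerivAt (fun q : ℝ => (1 - q) ^ (n - j))
        (((n - j : ℕ):ℝ) * (1-p) ^ (n - j - 1) * (-1)) p :=
      (hasDerivAt_pow (n - j) (1 - p)).comp p hinner
    have h3 := (h1.const_mul ((n.choose j : ℝ))).mul h2
    refine h3.congr_deriv ?_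
    have e1 : ubt n p j = (n.choose j : ℝ) * ((j:ℝ) * p ^ (j-1)) * (1-p)^(n-j) := by
      unfold ubt
      have : ((n * (n-1).choose (j-1) : ℕ) : ℝ) = ((j * n.choose j : ℕ) : ℝ) := by
        rw [natA n j hj1 hjn]
      push_cast at this
      rw [show (n.choose j : ℝ) * ((j:ℝ) * p ^ (j-1)) * (1-p)^(n-j)
          = ((j:ℝ) * (n.choose j : ℝ)) * p ^ (j-1) * (1-p) ^ (n-j) by ring, ← this]
    have e2 : ubt n p (j+1) = (n.choose j : ℝ) * p ^ j * (((n - j : ℕ):ℝ) * (1-p) ^ (n-j-1)) := by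
      unfold ubt
      simp only [Nat.add_sub_cancel]
      have : ((n * (n-1).choose j : ℕ) : ℝ) = (((n.choose j) * (n - j) : ℕ) : ℝ) := by
        rw [natB n j hn1]
      push_cast at this
      have hnj : n - (j+1) = n - j - 1 := by omega
      rw [hnj, show (n:ℝ) * ((n-1).choose j : ℝ) * p ^ j * (1-p) ^ (n-j-1)
          = ((n:ℝ) * ((n-1).choose j : ℝ)) * p ^ j * (1-p) ^ (n-j-1) by ring, this]
      ring
    rw [e1, e2]; ring
  have hsum := HasDerivAt.fun_sum hterm
  have htel : ∑ j ∈ Finset.Icc k n, (ubt n p j - ubt n p (j+1)) = Dbt n k p := by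
    rw [show Finset.Icc k n = Finset.Ico k (n+1) by rw [Finset.Ico_add_one_right_eq_Icc],
      Finset.sum_Ico_eq_sum_range]
    rw [Finset.sum_congr rfl (fun i _ => by
      rw [show k + i + 1 = k + (i+1) by omega] : ∀ i ∈ Finset.range (n+1-k),
        ubt n p (k+i) - ubt n p (k+i+1) = (fun i => ubt n p (k+i)) i - (fun i => ubt n p (k+i)) (i+1))]
    rw [Finset.sum_range_sub' (fun i => ubt n p (k+i)) (n+1-k)]
    have h2 : ubt n p (k + (n+1-k)) = 0 := by
      have : k + (n+1-k) = n+1 := by omega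
      rw [this]
      unfold ubt
      simp only [Nat.add_sub_cancel]
      rw [Nat.choose_eq_zero_of_lt (by omega : n - 1 < n)]
      simp
    rw [h2, sub_zero]
    simp only [add_zero]
    unfold ubt Dbt
    have : ((n * (n-1).choose (k-1) : ℕ) : ℝ) = ((k * n.choose k : ℕ) : ℝ) := by
      rw [natA n k hk1 hkn]
    push_cast at this
    rw [show (n:ℝ) * ((n-1).choose (k-1) : ℝ) * p ^ (k-1) * (1-p) ^ (n-k)
        = ((n:ℝ) * ((n-1).choose (k-1) : ℝ)) * p ^ (k-1) * (1-p) ^ (n-k) by ring, this]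
    try ring
  rw [← htel]
  exact hsum

section shape
variable (n k : ℕ)

lemma binTail_zero (hk1 : 1 ≤ k) : binTail n k 0 = 0 := by
  refine Finset.sum_eq_zero fun j hj => ?_
  simp only [Finset.mem_Icc] at hj
  rw [zero_pow (by omega : j ≠ 0)]
  ring

lemma binTail_one (hkn : k ≤ n) : binTail n k 1 = 1 := by
  unfold binTail
  rw [Finset.sum_eq_single n]
  · simp
  · intro j hj hne
    simp only [Finset.mem_Icc] at hj
    rw [sub_self, zero_pow (by omega : n - j ≠ 0)]
    ring
  · intro h
    exact absurd (Finset.mem_Icc.mpr ⟨hkn, le_refl n⟩) h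

lemma binTail_nonneg {p : ℝ} (hp : p ∈ Icc (0:ℝ) 1) : 0 ≤ binTail n k p := by
  refine Finset.sum_nonneg fun j _ => ?_
  have h0 := hp.1
  have h1 : (0:ℝ) ≤ 1 - p := by linarith [hp.2]
  positivity

lemma Dbt_nonneg {p : ℝ} (hp : p ∈ Icc (0:ℝ) 1) : 0 ≤ Dbt n k p := by
  have h0 := hp.1
  have h1 : (0:ℝ) ≤ 1 - p := by linarith [hp.2]
  unfold Dbt; positivity

lemma binTail_continuous : Continuous (binTail n k) := by
  unfold binTail
  exact continuous_finset_sum _ fun j _ => by continuity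

lemma binTail_monotoneOn (hk1 : 1 ≤ k) (hkn : k ≤ n) : MonotoneOn (binTail n k) (Icc 0 1) := by
  refine monotoneOn_of_deriv_nonneg (convex_Icc 0 1) (binTail_continuous n k).continuousOn
    (fun x _ => ((hasDerivAt_binTail n k hk1 hkn x).differentiableAt).differentiableWithinAt) ?_
  intro x hx
  rw [interior_Icc] at hx
  rw [(hasDerivAt_binTail n k hk1 hkn x).deriv]
  exact Dbt_nonneg n k ⟨hx.1.le, hx.2.le⟩

/-- inflection point -/
noncomputable def rbt : ℝ := ((k:ℝ) - 1) / ((n:ℝ) - 1)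

lemma rbt_mem (hk1 : 1 ≤ k) (hkn : k ≤ n) : rbt n k ∈ Icc (0:ℝ) 1 := by
  unfold rbt
  rcases Nat.eq_or_lt_of_le (show 1 ≤ n by omega) with h | h
  · have hk : k = 1 := by omega
    rw [hk]
    norm_num
  · constructor
    · apply div_nonneg <;> [skip; skip] <;> · simp; omega
    · rw [div_le_one (by simp; omega : (0:ℝ) < (n:ℝ) - 1)]
      simp; omega

end shape

section dshape
variable (n k : ℕ)

lemma hasDerivAt_Dbt (p : ℝ) :
    HasDerivAt (Dbt n k)
      ((k:ℝ) * (n.choose k : ℝ) * (((k-1:ℕ):ℝ) * p^(k-1-1)) * (1-p)^(n-k)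
        - (k:ℝ) * (n.choose k : ℝ) * p^(k-1) * (((n-k:ℕ):ℝ) * (1-p)^(n-k-1))) p := by
  have h1 : HasDerivAt (fun q : ℝ => q ^ (k-1)) (((k-1:ℕ):ℝ) * p ^ (k-1-1)) p :=
    hasDerivAt_pow (k-1) p
  have hinner : HasDerivAt (fun q : ℝ => 1 - q) (-1) p := by
    simpa using (hasDerivAt_id' p).const_sub (1:ℝ)
  have h2 : HasDerivAt (fun q : ℝ => (1 - q) ^ (n-k))
      (((n-k:ℕ):ℝ) * (1-p) ^ (n-k-1) * (-1)) p :=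
    (hasDerivAt_pow (n-k) (1-p)).comp p hinner
  have h3 := (h1.const_mul ((k:ℝ) * (n.choose k : ℝ))).mul h2
  refine h3.congr_deriv ?_
  ring

lemma Dbt_deriv_sign_pos (hk1 : 1 ≤ k) (hkn : k ≤ n) {p : ℝ} (hp : p ∈ Ioo 0 (rbt n k)) :
    0 ≤ (k:ℝ) * (n.choose k : ℝ) * (((k-1:ℕ):ℝ) * p^(k-1-1)) * (1-p)^(n-k)
        - (k:ℝ) * (n.choose k : ℝ) * p^(k-1) * (((n-k:ℕ):ℝ) * (1-p)^(n-k-1)) := by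
  have hr := rbt_mem n k hk1 hkn
  have hp0 : 0 < p := hp.1
  have hp1 : p < 1 := lt_of_lt_of_le hp.2 hr.2
  have hk2 : 2 ≤ k := by
    by_contra h
    have : k = 1 := by omega
    subst this
    have : rbt n 1 = 0 := by unfold rbt; simp
    rw [this] at hp
    exact absurd hp.2 (not_lt.mpr hp.1.le)
  have hc : (0:ℝ) ≤ (k:ℝ) * (n.choose k : ℝ) := by positivity
  rcases Nat.eq_or_lt_of_le hkn with rfl | hlt
  · -- k = n
    rw [Nat.sub_self]
    simp only [Nat.cast_zero, pow_zero, zero_mul, mul_zero, mul_one, sub_zero]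
    positivity
  · -- k < n
    have hn2 : 2 ≤ n := by omega
    have e1 : p^(k-1) = p^(k-1-1) * p := by
      rw [← pow_succ]; congr 1; omega
    have e2 : (1-p)^(n-k) = (1-p)^(n-k-1) * (1-p) := by
      rw [← pow_succ]; congr 1; omega
    rw [e1, e2]
    have hsign : 0 ≤ ((k-1:ℕ):ℝ) * (1-p) - ((n-k:ℕ):ℝ) * p := by
      have hprbt : p < ((k:ℝ) - 1) / ((n:ℝ) - 1) := hp.2
      have hn1 : (0:ℝ) < (n:ℝ) - 1 := by
        have : (2:ℝ) ≤ (n:ℝ) := by exact_mod_cast hn2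
        linarith
      have h4 : p * ((n:ℝ) - 1) < (k:ℝ) - 1 := by
        have := (lt_div_iff₀ hn1).mp hprbt
        linarith
      have hkc : ((k-1:ℕ):ℝ) = (k:ℝ) - 1 := by
        push_cast [Nat.cast_sub (by omega : 1 ≤ k)]; ring
      have hnc : ((n-k:ℕ):ℝ) = (n:ℝ) - (k:ℝ) := by
        push_cast [Nat.cast_sub hkn]; ring
      rw [hkc, hnc]
      nlinarith
    have hA : (0:ℝ) ≤ p^(k-1-1) := by positivity
    have hB : (0:ℝ) ≤ (1-p)^(n-k-1) := by
      have : (0:ℝ) ≤ 1 - p := by linarith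
      positivity
    calc (0:ℝ) ≤ ((k:ℝ) * (n.choose k : ℝ)) * (p^(k-1-1) * (1-p)^(n-k-1))
          * (((k-1:ℕ):ℝ) * (1-p) - ((n-k:ℕ):ℝ) * p) := by positivity
      _ = (k:ℝ) * (n.choose k : ℝ) * (((k-1:ℕ):ℝ) * p^(k-1-1)) * ((1-p)^(n-k-1) * (1-p))
        - (k:ℝ) * (n.choose k : ℝ) * (p^(k-1-1) * p) * (((n-k:ℕ):ℝ) * (1-p)^(n-k-1)) := by ring

end dshape

section dshape2
variable (n k : ℕ)

lemma Dbt_deriv_sign_neg (hk1 : 1 ≤ k) (hkn : k ≤ n) {p : ℝ} (hp : p ∈ Ioo (rbt n k) 1) :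
    (k:ℝ) * (n.choose k : ℝ) * (((k-1:ℕ):ℝ) * p^(k-1-1)) * (1-p)^(n-k)
        - (k:ℝ) * (n.choose k : ℝ) * p^(k-1) * (((n-k:ℕ):ℝ) * (1-p)^(n-k-1)) ≤ 0 := by
  have hr := rbt_mem n k hk1 hkn
  have hp0 : 0 < p := lt_of_le_of_lt hr.1 hp.1
  have hp1 : p < 1 := hp.2
  have h1p : (0:ℝ) ≤ 1 - p := by linarith
  have hc : (0:ℝ) ≤ (k:ℝ) * (n.choose k : ℝ) := by positivity
  rcases eq_or_lt_of_le hk1 with h | hk2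
  · -- k = 1
    subst h
    simp only [Nat.sub_self, Nat.cast_zero, zero_mul, mul_zero, zero_sub, pow_zero, mul_one]
    have hA : (0:ℝ) ≤ (1:ℝ) * ((Nat.choose n 1 : ℕ):ℝ) * (((n-1:ℕ):ℝ) * (1-p)^(n-1-1)) := by
      positivity
    simpa using neg_nonpos.mpr hA
  · rcases Nat.eq_or_lt_of_le hkn with rfl | hlt
    · -- k = n : rbt = 1, contradiction
      exfalso
      have hn1 : (0:ℝ) < (k:ℝ) - 1 := by
        have : (2:ℝ) ≤ (k:ℝ) := by exact_mod_cast hk2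
        linarith
      have : rbt k k = 1 := by unfold rbt; exact div_self (ne_of_gt hn1)
      rw [this] at hp
      exact absurd hp.2 (not_lt.mpr hp.1.le)
    · have hn2 : 2 ≤ n := by omega
      have e1 : p^(k-1) = p^(k-1-1) * p := by
        rw [← pow_succ]; congr 1; omega
      have e2 : (1-p)^(n-k) = (1-p)^(n-k-1) * (1-p) := by
        rw [← pow_succ]; congr 1; omega
      rw [e1, e2]
      have hsign : ((k-1:ℕ):ℝ) * (1-p) - ((n-k:ℕ):ℝ) * p ≤ 0 := by
        have hprbt : ((k:ℝ) - 1) / ((n:ℝ) - 1) < p := hp.1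
        have hn1 : (0:ℝ) < (n:ℝ) - 1 := by
          have : (2:ℝ) ≤ (n:ℝ) := by exact_mod_cast hn2
          linarith
        have h4 : (k:ℝ) - 1 < p * ((n:ℝ) - 1) := by
          have := (div_lt_iff₀ hn1).mp hprbt
          linarith
        have hkc : ((k-1:ℕ):ℝ) = (k:ℝ) - 1 := by
          push_cast [Nat.cast_sub (by omega : 1 ≤ k)]; ring
        have hnc : ((n-k:ℕ):ℝ) = (n:ℝ) - (k:ℝ) := by
          push_cast [Nat.cast_sub hkn]; ring
        rw [hkc, hnc]
        nlinarith
      have hA : (0:ℝ) ≤ ((k:ℝ) * (n.choose k : ℝ)) * (p^(k-1-1) * (1-p)^(n-k-1)) := by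
        positivity
      have key : (k:ℝ) * (n.choose k : ℝ) * (((k-1:ℕ):ℝ) * p^(k-1-1)) * ((1-p)^(n-k-1) * (1-p))
          - (k:ℝ) * (n.choose k : ℝ) * (p^(k-1-1) * p) * (((n-k:ℕ):ℝ) * (1-p)^(n-k-1))
          = ((k:ℝ) * (n.choose k : ℝ)) * (p^(k-1-1) * (1-p)^(n-k-1))
            * (((k-1:ℕ):ℝ) * (1-p) - ((n-k:ℕ):ℝ) * p) := by ring
      rw [key]
      exact mul_nonpos_of_nonneg_of_nonpos hA hsign

lemma Dbt_monotoneOn (hk1 : 1 ≤ k) (hkn : k ≤ n) : MonotoneOn (Dbt n k) (Icc 0 (rbt n k)) := by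
  refine monotoneOn_of_deriv_nonneg (convex_Icc _ _) ?_ ?_ ?_
  · exact Continuous.continuousOn (by unfold Dbt; continuity)
  · exact fun x _ => (hasDerivAt_Dbt n k x).differentiableAt.differentiableWithinAt
  · intro x hx
    rw [interior_Icc] at hx
    rw [(hasDerivAt_Dbt n k x).deriv]
    exact Dbt_deriv_sign_pos n k hk1 hkn hx

lemma Dbt_antitoneOn (hk1 : 1 ≤ k) (hkn : k ≤ n) : AntitoneOn (Dbt n k) (Icc (rbt n k) 1) := by
  refine antitoneOn_of_deriv_nonpos (convex_Icc _ _) ?_ ?_ ?_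
  · exact Continuous.continuousOn (by unfold Dbt; continuity)
  · exact fun x _ => (hasDerivAt_Dbt n k x).differentiableAt.differentiableWithinAt
  · intro x hx
    rw [interior_Icc] at hx
    rw [(hasDerivAt_Dbt n k x).deriv]
    exact Dbt_deriv_sign_neg n k hk1 hkn hx

end dshape2

noncomputable def mbt (n k : ℕ) (p : ℝ) : ℝ := p * Dbt n k p - binTail n k p

section mshape
variable (n k : ℕ) (hk1 : 1 ≤ k) (hkn : k ≤ n)
include hk1 hkn

lemma mbt_zero : mbt n k 0 = 0 := by
  unfold mbt; rw [binTail_zero n k hk1]; ring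

lemma mbt_monotoneOn : MonotoneOn (mbt n k) (Icc 0 (rbt n k)) := by
  intro p hp q hq hpq
  rcases eq_or_lt_of_le hpq with rfl | hlt
  · exact le_refl _
  obtain ⟨ξ, hξ, hslope⟩ := exists_hasDerivAt_eq_slope (binTail n k) (Dbt n k) hlt
    (binTail_continuous n k).continuousOn (fun x _ => hasDerivAt_binTail n k hk1 hkn x)
  have hξI : ξ ∈ Icc 0 (rbt n k) := ⟨(hp.1.trans_lt hξ.1).le, hξ.2.le.trans hq.2⟩
  have hDξ : Dbt n k ξ ≤ Dbt n k q := Dbt_monotoneOn n k hk1 hkn hξI hq (hξ.2.le.trans (le_refl q))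
  have hdiff : binTail n k q - binTail n k p = Dbt n k ξ * (q - p) := by
    rw [eq_div_iff (ne_of_gt (sub_pos.mpr hlt))] at hslope
    linarith [hslope]
  have hDpq : Dbt n k p ≤ Dbt n k q := Dbt_monotoneOn n k hk1 hkn hp hq hpq
  unfold mbt
  nlinarith [hp.1]

lemma mbt_antitoneOn : AntitoneOn (mbt n k) (Icc (rbt n k) 1) := by
  intro p hp q hq hpq
  rcases eq_or_lt_of_le hpq with rfl | hlt
  · exact le_refl _
  obtain ⟨ξ, hξ, hslope⟩ := exists_hasDerivAt_eq_slope (binTail n k) (Dbt n k) hlt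
    (binTail_continuous n k).continuousOn (fun x _ => hasDerivAt_binTail n k hk1 hkn x)
  have hξI : ξ ∈ Icc (rbt n k) 1 := ⟨(hp.1.trans_lt hξ.1).le, hξ.2.le.trans hq.2⟩
  have hDξ : Dbt n k q ≤ Dbt n k ξ := Dbt_antitoneOn n k hk1 hkn hξI hq hξ.2.le
  have hdiff : binTail n k q - binTail n k p = Dbt n k ξ * (q - p) := by
    rw [eq_div_iff (ne_of_gt (sub_pos.mpr hlt))] at hslope
    linarith [hslope]
  have hDpq : Dbt n k q ≤ Dbt n k p := Dbt_antitoneOn n k hk1 hkn hp hq hpq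
  have hp0 : 0 ≤ p := (rbt_mem n k hk1 hkn).1.trans hp.1
  unfold mbt
  nlinarith

lemma hasDerivAt_psi {p : ℝ} (hp : p ≠ 0) :
    HasDerivAt (psi n k) (mbt n k p / p^2) p := by
  have h1 : HasDerivAt (fun q : ℝ => q⁻¹ * binTail n k q)
      (-(p^2)⁻¹ * binTail n k p + p⁻¹ * Dbt n k p) p :=
    (hasDerivAt_inv hp).mul (hasDerivAt_binTail n k hk1 hkn p)
  have heq : (fun q : ℝ => q⁻¹ * binTail n k q) =ᶠ[nhds p] psi n k := by
    filter_upwards [isOpen_compl_singleton.mem_nhds (by simpa using hp :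
      p ∈ ({0}ᶜ : Set ℝ))] with q hq
    simp only [Set.mem_compl_iff, Set.mem_singleton_iff] at hq
    unfold psi
    rw [if_neg hq]
  have := h1.congr_of_eventuallyEq heq.symm
  refine this.congr_deriv ?_
  unfold mbt
  field_simp
  ring

lemma psi_nonneg {p : ℝ} (hp : p ∈ Ioc (0:ℝ) 1) : 0 ≤ psi n k p := by
  have h0 := hp.1
  unfold psi
  rw [if_neg (ne_of_gt h0)]
  exact mul_nonneg (by positivity) (binTail_nonneg n k ⟨h0.le, hp.2⟩)

lemma binTail_eq_mul_psi {p : ℝ} (hp : p ≠ 0) : binTail n k p = p * psi n k p := by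
  unfold psi
  rw [if_neg hp]
  field_simp

end mshape

section support
variable (n k : ℕ)

lemma psi_continuousOn (hk1 : 1 ≤ k) (hkn : k ≤ n) :
    ContinuousOn (psi n k) {p : ℝ | p ≠ 0} := fun p hp =>
  ((hasDerivAt_psi n k hk1 hkn hp).continuousAt).continuousWithinAt

lemma support_line (hk1 : 1 ≤ k) (hkn : k ≤ n) {β : ℝ} (hβ0 : 0 < β) (hβ1 : β ≤ 1) :
    ∃ a b : ℝ, 0 ≤ a ∧ 0 ≤ b ∧ (∀ t ∈ Icc (0:ℝ) 1, binTail n k t ≤ a*t+b) ∧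
      a*β + b ≤ fnk n k β := by
  -- maximum of psi on [β,1]
  have hcont : ContinuousOn (psi n k) (Icc β 1) :=
    (psi_continuousOn n k hk1 hkn).mono (fun x hx => ne_of_gt (hβ0.trans_le hx.1))
  obtain ⟨pstar, hpstarI, hpstar⟩ := (isCompact_Icc (a := β) (b := 1)).exists_isMaxOn
    (Set.nonempty_Icc.mpr hβ1) hcont
  have hsup : sSup (psi n k '' Icc β 1) = psi n k pstar := by
    apply IsGreatest.csSup_eq
    exact ⟨Set.mem_image_of_mem _ hpstarI, fun y hy => by
      obtain ⟨x, hx, rfl⟩ := hy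
      exact hpstar hx⟩
  have hfnkβ : fnk n k β = β * psi n k pstar := by rw [fnk, hsup]
  have hpstar0 : 0 < pstar := hβ0.trans_le hpstarI.1
  by_cases hA : ∀ t ∈ Ioc (0:ℝ) 1, psi n k t ≤ psi n k pstar
  · -- Case A : chord through the origin
    refine ⟨psi n k pstar, 0, psi_nonneg n k hk1 hkn ⟨hpstar0, hpstarI.2⟩, le_refl 0, ?_, ?_⟩
    · intro t ht
      rcases eq_or_lt_of_le ht.1 with rfl | ht0
      · rw [binTail_zero n k hk1]; simp
      · rw [binTail_eq_mul_psi n k hk1 hkn (ne_of_gt ht0)]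
        have := hA t ⟨ht0, ht.2⟩
        nlinarith
    · rw [hfnkβ]; ring_nf; exact le_refl _
  · -- Case B : tangent line at β
    push_neg at hA
    obtain ⟨t₀, ht₀I, ht₀⟩ := hA
    have ht₀β : t₀ < β := by
      by_contra h
      push_neg at h
      exact absurd (hpstar ⟨h, ht₀I.2⟩) (not_le.mpr ht₀)
    -- MVT to find c with mbt < 0
    have hψβ : psi n k t₀ > psi n k β := lt_of_le_of_lt (hpstar ⟨le_refl β, hβ1⟩) ht₀
    obtain ⟨c, hcI, hcslope⟩ := exists_hasDerivAt_eq_slope (psi n k)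
      (fun x => mbt n k x / x^2) ht₀β
      ((psi_continuousOn n k hk1 hkn).mono (fun x hx => ne_of_gt (ht₀I.1.trans_le hx.1)))
      (fun x hx => hasDerivAt_psi n k hk1 hkn (ne_of_gt (ht₀I.1.trans hx.1)))
    have hc0 : 0 < c := ht₀I.1.trans hcI.1
    have hmc : mbt n k c < 0 := by
      have hslopeneg : (psi n k β - psi n k t₀) / (β - t₀) < 0 :=
        div_neg_of_neg_of_pos (by linarith) (by linarith)
      rw [← hcslope] at hslopeneg
      by_contra h
      push_neg at h
      exact absurd hslopeneg (not_lt.mpr (div_nonneg h (by positivity)))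
    have hrc : rbt n k ≤ c := by
      by_contra h
      push_neg at h
      have := mbt_monotoneOn n k hk1 hkn ⟨le_refl 0, (rbt_mem n k hk1 hkn).1⟩
        ⟨hc0.le, h.le⟩ hc0.le
      rw [mbt_zero n k hk1 hkn] at this
      exact absurd this (not_le.mpr hmc)
    have hcβ : c < β := hcI.2
    have hc1 : c ≤ 1 := hcβ.le.trans hβ1
    -- m is negative on [β, 1]
    have hmneg : ∀ x ∈ Icc β 1, mbt n k x < 0 := fun x hx =>
      lt_of_le_of_lt (mbt_antitoneOn n k hk1 hkn ⟨hrc, hc1⟩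
        ⟨hrc.trans (hcβ.le.trans hx.1), hx.2⟩ (hcβ.le.trans hx.1)) hmc
    -- psi is antitone on [β,1]
    have hψanti : AntitoneOn (psi n k) (Icc β 1) := by
      refine antitoneOn_of_deriv_nonpos (convex_Icc _ _) hcont
        (fun x hx => by
          rw [interior_Icc] at hx
          exact (hasDerivAt_psi n k hk1 hkn
            (ne_of_gt (hβ0.trans hx.1))).differentiableAt.differentiableWithinAt) ?_
      intro x hx
      rw [interior_Icc] at hx
      have hx0 : (0:ℝ) < x := hβ0.trans hx.1
      rw [(hasDerivAt_psi n k hk1 hkn (ne_of_gt hx0)).deriv]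
      exact le_of_lt (div_neg_of_neg_of_pos (hmneg x ⟨hx.1.le, hx.2.le⟩) (by positivity))
    -- hence the sup over [β,1] is attained at β
    have hψβmax : psi n k pstar = psi n k β := by
      refine le_antisymm (hψanti ⟨le_refl β, hβ1⟩ hpstarI hpstarI.1) (hpstar ⟨le_refl β, hβ1⟩)
    have hβmem : β ∈ Icc (0:ℝ) 1 := ⟨hβ0.le, hβ1⟩
    have hmβ : mbt n k β < 0 := hmneg β ⟨le_refl β, hβ1⟩
    refine ⟨Dbt n k β, binTail n k β - β * Dbt n k β, Dbt_nonneg n k hβmem, ?_, ?_, ?_⟩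
    · -- b ≥ 0
      have : binTail n k β - β * Dbt n k β = -(mbt n k β) := by unfold mbt; ring
      rw [this]
      linarith
    · -- tangent line dominates
      intro t ht
      have hr1 : rbt n k ≤ 1 := (rbt_mem n k hk1 hkn).2
      have hrβ : rbt n k ≤ β := hrc.trans hcβ.le
      -- first, the bound on [rbt, 1]
      have key : ∀ t' ∈ Icc (rbt n k) 1,
          binTail n k t' ≤ Dbt n k β * t' + (binTail n k β - β * Dbt n k β) := by
        intro t' ht'
        rcases lt_trichotomy t' β with hlt | heq | hgt
        · obtain ⟨ξ, hξ, hslope⟩ := exists_hasDerivAt_eq_slope (binTail n k) (Dbt n k) hlt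
            (binTail_continuous n k).continuousOn (fun x _ => hasDerivAt_binTail n k hk1 hkn x)
          rw [eq_div_iff (ne_of_gt (sub_pos.mpr hlt))] at hslope
          have hξI : ξ ∈ Icc (rbt n k) 1 := ⟨ht'.1.trans hξ.1.le, hξ.2.le.trans hβ1⟩
          have : Dbt n k β ≤ Dbt n k ξ :=
            Dbt_antitoneOn n k hk1 hkn hξI ⟨hrβ, hβ1⟩ hξ.2.le
          nlinarith
        · subst heq; linarith [le_refl (binTail n k t')]
        · obtain ⟨ξ, hξ, hslope⟩ := exists_hasDerivAt_eq_slope (binTail n k) (Dbt n k) hgt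
            (binTail_continuous n k).continuousOn (fun x _ => hasDerivAt_binTail n k hk1 hkn x)
          rw [eq_div_iff (ne_of_gt (sub_pos.mpr hgt))] at hslope
          have hξI : ξ ∈ Icc (rbt n k) 1 := ⟨hrβ.trans hξ.1.le, hξ.2.le.trans ht'.2⟩
          have : Dbt n k ξ ≤ Dbt n k β :=
            Dbt_antitoneOn n k hk1 hkn ⟨hrβ, hβ1⟩ hξI hξ.1.le
          nlinarith
      rcases le_or_gt (rbt n k) t with hrt | htr
      · exact key t ⟨hrt, ht.2⟩
      · -- t < rbt : use convexity of binTail on [0, rbt]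
        have hr0 : 0 < rbt n k := lt_of_le_of_lt ht.1 htr
        have ht0 : 0 ≤ t := ht.1
        have hlam0 : 0 ≤ t / rbt n k := by positivity
        have hlam1 : t / rbt n k ≤ 1 := by
          rw [div_le_one hr0]; exact htr.le
        have hconv : ConvexOn ℝ (Icc 0 (rbt n k)) (binTail n k) := by
          apply MonotoneOn.convexOn_of_deriv (convex_Icc _ _)
            (binTail_continuous n k).continuousOn
            (fun x hx => (hasDerivAt_binTail n k hk1 hkn x).differentiableAt.differentiableWithinAt)
          intro x hx y hy hxy
          rw [interior_Icc] at hx hy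
          rw [(hasDerivAt_binTail n k hk1 hkn x).deriv, (hasDerivAt_binTail n k hk1 hkn y).deriv]
          exact Dbt_monotoneOn n k hk1 hkn ⟨hx.1.le, hx.2.le⟩ ⟨hy.1.le, hy.2.le⟩ hxy
        have h2 := hconv.2 (Set.left_mem_Icc.mpr hr0.le) (Set.right_mem_Icc.mpr hr0.le)
          (by linarith : (0:ℝ) ≤ 1 - t / rbt n k) hlam0 (by ring)
        have harg : (1 - t / rbt n k) • (0:ℝ) + (t / rbt n k) • (rbt n k) = t := by
          rw [smul_zero, smul_eq_mul, zero_add, div_mul_cancel₀ _ hr0.ne']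
        rw [harg] at h2
        have hchord : binTail n k t ≤ (t / rbt n k) * binTail n k (rbt n k) := by
          rw [binTail_zero n k hk1] at h2
          simpa using h2
        have hkeyr := key (rbt n k) ⟨le_refl _, hr1⟩
        have hbb : 0 ≤ binTail n k β - β * Dbt n k β := by
          have : binTail n k β - β * Dbt n k β = -(mbt n k β) := by unfold mbt; ring
          rw [this]; linarith
        have hbtr : 0 ≤ binTail n k (rbt n k) :=
          binTail_nonneg n k ⟨hr0.le, hr1⟩
        calc binTail n k t ≤ (t / rbt n k) * binTail n k (rbt n k) := hchord
          _ ≤ (t / rbt n k) * (Dbt n k β * rbt n k + (binTail n k β - β * Dbt n k β)) := by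
              apply mul_le_mul_of_nonneg_left hkeyr hlam0
          _ = Dbt n k β * t + (t / rbt n k) * (binTail n k β - β * Dbt n k β) := by
              field_simp
          _ ≤ Dbt n k β * t + (binTail n k β - β * Dbt n k β) := by
              nlinarith
    · -- a*β + b ≤ fnk β
      rw [hfnkβ, hψβmax, binTail_eq_mul_psi n k hk1 hkn (ne_of_gt hβ0)]
      ring_nf
      exact le_refl _
end support

lemma sorted_lower_get {α : Type*} [LinearOrder α] {l : List α} (hs : l.Pairwise (· ≤ ·))
    {E : Set α} (hE : IsLowerSet E) (i : Fin l.length) :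
    l.get i ∈ E ↔ (i : ℕ) < l.countP (fun x => decide (x ∈ E)) := by
  constructor
  · intro hi
    have htake : ∀ a ∈ l.take (i+1), (fun x => decide (x ∈ E)) a = true := by
      intro a ha
      obtain ⟨j, hj, rfl⟩ := List.mem_take_iff_getElem.mp ha
      simp only [decide_eq_true_eq]
      have hji : j ≤ (i:ℕ) := by omega
      have hle : l[j] ≤ l.get i := by
        have := List.Pairwise.rel_get_of_le hs (show (⟨j, by omega⟩ : Fin l.length) ≤ i from hji)
        simpa using this
      exact hE hle hi
    have h1 : (l.take (i+1)).countP (fun x => decide (x ∈ E)) = (l.take (i+1)).length := by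
      rw [List.countP_eq_length]
      exact htake
    have h2 : (l.take (i+1)).length = i+1 := by
      rw [List.length_take]
      omega
    calc (i:ℕ) < i + 1 := Nat.lt_succ_self _
      _ = (l.take (i+1)).countP (fun x => decide (x ∈ E)) := by rw [h1, h2]
      _ ≤ l.countP (fun x => decide (x ∈ E)) := by
          conv_rhs => rw [← List.take_append_drop (i+1) l]
          rw [List.countP_append]
          omega
  · intro hi
    by_contra hmem
    have hdrop : ∀ a ∈ l.drop (i:ℕ), (fun x => decide (x ∈ E)) a = false := by
      intro a ha
      obtain ⟨j, hj, rfl⟩ := List.mem_drop_iff_getElem.mp ha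
      simp only [decide_eq_false_iff_not]
      intro haE
      apply hmem
      have hle : l.get i ≤ l[(i:ℕ)+j] := by
        have := List.Pairwise.rel_get_of_le hs (show i ≤ (⟨(i:ℕ)+j, by omega⟩ : Fin l.length) by
          simp [Fin.le_def])
        simpa using this
      exact hE hle haE
    have h0 : (l.drop (i:ℕ)).countP (fun x => decide (x ∈ E)) = 0 := by
      rw [List.countP_eq_zero]
      intro a ha
      simpa using hdrop a ha
    have : l.countP (fun x => decide (x ∈ E)) ≤ (i:ℕ) := by
      conv_lhs => rw [← List.take_append_drop (i:ℕ) l]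
      rw [List.countP_append, h0]
      have := List.countP_le_length (l := l.take (i:ℕ)) (p := fun x => decide (x ∈ E))
      rw [List.length_take] at this
      omega
    omega

lemma orderStat_mem_lower_iff {α : Type*} [LinearOrder α] {n k : ℕ}
    (hk1 : 1 ≤ k) (hkn : k ≤ n) {E : Set α} (hE : IsLowerSet E) (v : Fin n → α) (d : α) :
    orderStat k v d ∈ E ↔ k ≤ (Finset.univ.filter (fun i => v i ∈ E)).card := by
  set l := (Multiset.map v Finset.univ.val).sort (· ≤ ·) with hl
  have hlen : l.length = n := by
    rw [hl, Multiset.length_sort, Multiset.card_map]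
    simp
  have hsorted : l.Pairwise (· ≤ ·) := Multiset.pairwise_sort _ _
  have hk1' : k - 1 < l.length := by omega
  have hgetD : orderStat k v d = l.get ⟨k-1, hk1'⟩ := by
    rw [orderStat, ← hl, List.getD_eq_getElem l d hk1']
    simp
  have hcount : l.countP (fun x => decide (x ∈ E))
      = (Finset.univ.filter (fun i => v i ∈ E)).card := by
    have h1 : l.countP (fun x => decide (x ∈ E))
        = Multiset.countP (fun x => x ∈ E) (Multiset.map v Finset.univ.val) := by
      rw [← Multiset.coe_countP (fun x => x ∈ E) l]
      congr 1
      rw [hl]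
      exact Multiset.sort_eq _ _
    rw [h1, Multiset.countP_map]
    rw [Finset.card, Finset.filter_val]
  rw [hgetD, sorted_lower_get hsorted hE ⟨k-1, hk1'⟩, hcount]
  simp only [Fin.val_mk]
  omega

variable {Ω : Type*} [MeasurableSpace Ω]

lemma cell_eq (n : ℕ) (E : Set Ω) (A : Finset (Fin n)) (v : Fin n → Ω) :
    v ∈ Set.pi Set.univ (fun i => if i ∈ A then E else Eᶜ) ↔
      A = Finset.univ.filter (fun i => v i ∈ E) := by
  simp only [Set.mem_pi, Set.mem_univ, forall_true_left]
  constructor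
  · intro h
    ext i
    simp only [Finset.mem_filter, Finset.mem_univ, true_and]
    constructor
    · intro hi
      have := h i
      rwa [if_pos hi] at this
    · intro hi
      by_contra hni
      have := h i
      rw [if_neg hni] at this
      exact this hi
  · rintro rfl i
    by_cases hi : v i ∈ E
    · rw [if_pos (by simp [hi])]; exact hi
    · rw [if_neg (by simp [hi])]; exact hi

lemma pi_card_filter (n k : ℕ) (μ : Measure Ω) [IsProbabilityMeasure μ]
    {E : Set Ω} (hE : MeasurableSet E) :
    Measure.pi (fun _ : Fin n => μ)
        {v : Fin n → Ω | k ≤ (Finset.univ.filter (fun i => v i ∈ E)).card}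
      = ∑ j ∈ Finset.Icc k n, (n.choose j : ℝ≥0∞) * μ E ^ j * μ Eᶜ ^ (n - j) := by
  set 𝒜 : Finset (Finset (Fin n)) := Finset.univ.powerset.filter (fun A => k ≤ A.card) with h𝒜
  have hevent : {v : Fin n → Ω | k ≤ (Finset.univ.filter (fun i => v i ∈ E)).card}
      = ⋃ A ∈ 𝒜, Set.pi Set.univ (fun i => if i ∈ A then E else Eᶜ) := by
    ext v
    simp only [Set.mem_setOf_eq, Set.mem_iUnion]
    constructor
    · intro hv
      refine ⟨Finset.univ.filter (fun i => v i ∈ E), ?_, ?_⟩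
      · rw [h𝒜, Finset.mem_filter]
        exact ⟨Finset.mem_powerset.mpr (Finset.subset_univ _), hv⟩
      · rw [cell_eq]
    · rintro ⟨A, hA, hv⟩
      rw [cell_eq] at hv
      rw [h𝒜, Finset.mem_filter] at hA
      rw [← hv]
      exact hA.2
  have hcellmeas : ∀ A : Finset (Fin n),
      MeasurableSet (Set.pi Set.univ (fun i => if i ∈ A then E else Eᶜ)) := by
    intro A
    refine MeasurableSet.pi Set.countable_univ (fun i _ => ?_)
    by_cases hi : i ∈ A
    · rw [if_pos hi]; exact hE
    · rw [if_neg hi]; exact hE.compl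
  have hdisj : (↑𝒜 : Set (Finset (Fin n))).PairwiseDisjoint
      (fun A => Set.pi Set.univ (fun i => if i ∈ A then E else Eᶜ)) := by
    intro A _ B _ hAB
    refine Set.disjoint_left.mpr (fun v hvA hvB => ?_)
    rw [cell_eq] at hvA hvB
    exact hAB (hvA.trans hvB.symm)
  have hcellval : ∀ A : Finset (Fin n),
      Measure.pi (fun _ : Fin n => μ) (Set.pi Set.univ (fun i => if i ∈ A then E else Eᶜ))
        = μ E ^ A.card * μ Eᶜ ^ (n - A.card) := by
    intro A
    rw [Measure.pi_pi]
    have : ∀ i : Fin n, μ (if i ∈ A then E else Eᶜ) = if i ∈ A then μ E else μ Eᶜ := by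
      intro i; by_cases hi : i ∈ A <;> simp [hi]
    rw [Finset.prod_congr rfl (fun i _ => this i)]
    rw [← Finset.prod_filter_mul_prod_filter_not Finset.univ (· ∈ A)]
    rw [Finset.prod_congr rfl (fun i hi => if_pos (Finset.mem_filter.mp hi).2),
      Finset.prod_congr rfl (fun i hi => if_neg (Finset.mem_filter.mp hi).2)]
    rw [Finset.prod_const, Finset.prod_const]
    congr 1
    · congr 1
      rw [Finset.filter_univ_mem]
    · congr 1
      have h1 : (Finset.univ.filter (fun i => ¬ i ∈ A)).card
          = n - (Finset.univ.filter (· ∈ A)).card := by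
        have := Finset.card_filter_add_card_filter_not
          (s := (Finset.univ : Finset (Fin n))) (p := (· ∈ A))
        simp only [Finset.card_univ, Fintype.card_fin] at this
        omega
      rw [h1, Finset.filter_univ_mem]
  rw [hevent, measure_biUnion_finset hdisj (fun A _ => hcellmeas A)]
  rw [Finset.sum_congr rfl (fun A _ => hcellval A)]
  have hpart : 𝒜 = (Finset.Icc k n).biUnion (fun j => Finset.powersetCard j Finset.univ) := by
    ext A
    simp only [h𝒜, Finset.mem_filter, Finset.mem_powerset, Finset.mem_biUnion,
      Finset.mem_Icc, Finset.mem_powersetCard]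
    constructor
    · intro ⟨hsub, hk⟩
      exact ⟨A.card, ⟨hk, by simpa using Finset.card_le_card hsub⟩, hsub, rfl⟩
    · rintro ⟨j, hj, hsub, rfl⟩
      exact ⟨hsub, hj.1⟩
  rw [hpart, Finset.sum_biUnion]
  · refine Finset.sum_congr rfl (fun j hj => ?_)
    rw [Finset.sum_congr rfl (fun A hA => by
      rw [(Finset.mem_powersetCard.mp hA).2] :
      ∀ A ∈ Finset.powersetCard j Finset.univ,
        μ E ^ A.card * μ Eᶜ ^ (n - A.card) = μ E ^ j * μ Eᶜ ^ (n - j))]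
    rw [Finset.sum_const, Finset.card_powersetCard]
    simp only [Finset.card_univ, Fintype.card_fin]
    rw [nsmul_eq_mul]
    ring
  · intro j hj i hi hji
    simp only [Function.onFun]
    refine Finset.disjoint_left.mpr (fun A hAj hAi => ?_)
    rw [Finset.mem_powersetCard] at hAj hAi
    exact hji (hAj.2.symm.trans hAi.2)

section meas
variable {Ω : Type*} [MeasurableSpace Ω]


lemma measurableSet_card_ge (n k : ℕ) {E : Set Ω} (hE : MeasurableSet E) :
    MeasurableSet {v : Fin n → Ω | k ≤ (Finset.univ.filter (fun i => v i ∈ E)).card} := by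
  have : {v : Fin n → Ω | k ≤ (Finset.univ.filter (fun i => v i ∈ E)).card}
      = ⋃ A ∈ Finset.powersetCard k (Finset.univ : Finset (Fin n)),
          ⋂ i ∈ A, (fun v : Fin n → Ω => v i) ⁻¹' E := by
    ext v
    simp only [Set.mem_setOf_eq, Set.mem_iUnion, Set.mem_iInter, Set.mem_preimage]
    constructor
    · intro hv
      obtain ⟨A, hA, hcard⟩ := Finset.exists_subset_card_eq hv
      refine ⟨A, Finset.mem_powersetCard.mpr ⟨Finset.subset_univ _, hcard⟩, fun i hi => ?_⟩
      have := hA hi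
      simp only [Finset.mem_filter] at this
      exact this.2
    · rintro ⟨A, hA, hi⟩
      rw [Finset.mem_powersetCard] at hA
      calc k = A.card := hA.2.symm
        _ ≤ (Finset.univ.filter (fun i => v i ∈ E)).card := by
            apply Finset.card_le_card
            intro i hiA
            simp only [Finset.mem_filter, Finset.mem_univ, true_and]
            exact hi i hiA
  rw [this]
  exact MeasurableSet.biUnion (Finset.countable_toSet _)
    (fun A _ => MeasurableSet.biInter (Finset.countable_toSet _)
      (fun i _ => (measurable_pi_apply i) hE))

lemma measurable_orderStat {n k : ℕ} (hk1 : 1 ≤ k) (hkn : k ≤ n) (d : unitInterval) :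
    Measurable (fun v : Fin n → unitInterval => orderStat k v d) := by
  apply measurable_of_Iic
  intro t
  have : (fun v : Fin n → unitInterval => orderStat k v d) ⁻¹' (Iic t)
      = {v : Fin n → unitInterval | k ≤ (Finset.univ.filter (fun i => v i ∈ Iic t)).card} := by
    ext v
    simp only [Set.mem_preimage, Set.mem_Iic, Set.mem_setOf_eq]
    exact orderStat_mem_lower_iff hk1 hkn (isLowerSet_Iic t) v d
  rw [this]
  exact measurableSet_card_ge n k measurableSet_Iic

lemma binom_bridge (n k : ℕ) (hk1 : 1 ≤ k) (μ : Measure Ω) [IsProbabilityMeasure μ]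
    {E : Set Ω} (hE : MeasurableSet E) :
    ∑ j ∈ Finset.Icc k n, (n.choose j : ℝ≥0∞) * μ E ^ j * μ Eᶜ ^ (n - j)
      = ENNReal.ofReal (binTail n k (μ E).toReal) := by
  set t : ℝ := (μ E).toReal with ht
  have hEne : μ E ≠ ⊤ := (measure_lt_top μ E).ne
  have ht0 : 0 ≤ t := ENNReal.toReal_nonneg
  have ht1 : t ≤ 1 := by
    rw [ht, ← ENNReal.toReal_one]
    exact ENNReal.toReal_mono ENNReal.one_ne_top prob_le_one
  have hμE : μ E = ENNReal.ofReal t := (ENNReal.ofReal_toReal hEne).symm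
  have hμEc : μ Eᶜ = ENNReal.ofReal (1 - t) := by
    rw [measure_compl hE hEne, measure_univ, hμE,
      ENNReal.ofReal_sub 1 ht0, ENNReal.ofReal_one]
  rw [binTail, ENNReal.ofReal_sum_of_nonneg]
  · refine Finset.sum_congr rfl (fun j hj => ?_)
    rw [hμE, hμEc, ENNReal.ofReal_mul (by positivity), ENNReal.ofReal_mul (by positivity),
      ENNReal.ofReal_pow ht0, ENNReal.ofReal_pow (by linarith), ENNReal.ofReal_natCast]
  · intro j hj
    have h1t : (0:ℝ) ≤ 1 - t := by linarith
    positivity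

end meas

lemma main_estimate (n k : ℕ) (hk1 : 1 ≤ k) (hkn : k ≤ n)
    {X : Type} [MeasurableSpace X] (P : Measure X) [IsProbabilityMeasure P]
    (q : X → ℝ≥0∞) (hqm : Measurable q) (hq1 : ∀ x, q x ≤ 1) {β : ℝ}
    (hβ0 : 0 ≤ β) (hβ1 : β ≤ 1) (hint : ∫⁻ x, q x ∂P ≤ ENNReal.ofReal β) :
    ∫⁻ x, ENNReal.ofReal (binTail n k (q x).toReal) ∂P ≤ ENNReal.ofReal (fnk n k β) := by
  rcases eq_or_lt_of_le hβ0 with rfl | hβpos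
  · -- β = 0
    simp only [ENNReal.ofReal_zero, nonpos_iff_eq_zero] at hint
    have hq0 : ∀ᵐ x ∂P, q x = 0 := (lintegral_eq_zero_iff hqm).mp hint
    have : ∫⁻ x, ENNReal.ofReal (binTail n k (q x).toReal) ∂P = 0 := by
      rw [← lintegral_zero (μ := P)]
      apply lintegral_congr_ae
      filter_upwards [hq0] with x hx
      rw [hx]
      simp [binTail_zero n k hk1]
    rw [this]
    exact zero_le
  · obtain ⟨a, b, ha, hb, hdom, hline⟩ := support_line n k hk1 hkn hβpos hβ1
    have hptwise : ∀ x, ENNReal.ofReal (binTail n k (q x).toReal)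
        ≤ ENNReal.ofReal a * q x + ENNReal.ofReal b := by
      intro x
      have hqne : q x ≠ ⊤ := (lt_of_le_of_lt (hq1 x) (by norm_num)).ne
      have htx : (q x).toReal ∈ Icc (0:ℝ) 1 := by
        constructor
        · exact ENNReal.toReal_nonneg
        · rw [← ENNReal.toReal_one]
          exact ENNReal.toReal_mono ENNReal.one_ne_top (hq1 x)
      calc ENNReal.ofReal (binTail n k (q x).toReal)
          ≤ ENNReal.ofReal (a * (q x).toReal + b) :=
            ENNReal.ofReal_le_ofReal (hdom _ htx)
        _ = ENNReal.ofReal a * q x + ENNReal.ofReal b := by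
            rw [ENNReal.ofReal_add (by positivity) hb,
              ENNReal.ofReal_mul ha, ENNReal.ofReal_toReal hqne]
    calc ∫⁻ x, ENNReal.ofReal (binTail n k (q x).toReal) ∂P
        ≤ ∫⁻ x, (ENNReal.ofReal a * q x + ENNReal.ofReal b) ∂P := lintegral_mono hptwise
      _ = ENNReal.ofReal a * ∫⁻ x, q x ∂P + ENNReal.ofReal b := by
          rw [lintegral_add_right _ measurable_const, lintegral_const_mul _ hqm,
            lintegral_const, measure_univ, mul_one]
      _ ≤ ENNReal.ofReal a * ENNReal.ofReal β + ENNReal.ofReal b :=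
          add_le_add_left (mul_le_mul_right hint _) _
      _ = ENNReal.ofReal (a * β + b) := by
          rw [ENNReal.ofReal_add (by positivity) hb, ENNReal.ofReal_mul ha]
      _ ≤ ENNReal.ofReal (fnk n k β) := ENNReal.ofReal_le_ofReal hline

lemma sufficiency (n k : ℕ) (hk1 : 1 ≤ k) (hkn : k ≤ n)
    (f : unitInterval → unitInterval) (hf : Monotone f)
    (hfnk : ∀ u : unitInterval, fnk n k (u : ℝ) ≤ (f u : ℝ))
    (X : Type) (mX : MeasurableSpace X) (P : Measure X) (hP : IsProbabilityMeasure P)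
    (K : Kernel X unitInterval) (hK : IsMarkovKernel K)
    (hPker : ∀ α : unitInterval, ∫⁻ x, K x (Set.Iic α) ∂P ≤ ENNReal.ofReal (α : ℝ))
    (α : unitInterval) :
    ∫⁻ x, (Measure.pi fun _ : Fin n => K x).map
        (fun u : Fin n → unitInterval => f (orderStat k u 0)) (Set.Iic α) ∂P
      ≤ ENNReal.ofReal (α : ℝ) := by
  have hα0 : (0:ℝ) ≤ (α:ℝ) := α.2.1
  set g : (Fin n → unitInterval) → unitInterval := fun v => f (orderStat k v 0) with hg
  have hgm : Measurable g := (hf.measurable).comp (measurable_orderStat hk1 hkn 0)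
  set E : Set unitInterval := f ⁻¹' (Set.Iic α) with hEdef
  have hE : MeasurableSet E := hf.measurable measurableSet_Iic
  have hEl : IsLowerSet E := by
    intro s t hts hs
    exact le_trans (hf hts) hs
  -- pointwise evaluation of the integrand
  have heval : ∀ x, (Measure.pi fun _ : Fin n => K x).map g (Set.Iic α)
      = ENNReal.ofReal (binTail n k ((K x) E).toReal) := by
    intro x
    have : IsProbabilityMeasure (K x) := hK.isProbabilityMeasure x
    rw [Measure.map_apply hgm measurableSet_Iic]
    have hpre : g ⁻¹' (Set.Iic α)
        = {v : Fin n → unitInterval | k ≤ (Finset.univ.filter (fun i => v i ∈ E)).card} := by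
      ext v
      simp only [Set.mem_preimage, Set.mem_Iic, Set.mem_setOf_eq, hg]
      exact orderStat_mem_lower_iff hk1 hkn hEl v 0
    rw [hpre, pi_card_filter n k (K x) hE, binom_bridge n k hk1 (K x) hE]
  rw [lintegral_congr (fun x => heval x)]
  rcases Set.eq_empty_or_nonempty E with hEe | hEne
  · -- E empty
    have : ∀ x, ENNReal.ofReal (binTail n k ((K x) E).toReal) = 0 := by
      intro x
      rw [hEe]
      simp only [measure_empty, ENNReal.toReal_zero]
      rw [binTail_zero n k hk1]
      simp
    rw [lintegral_congr this]
    simp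
  · set s : ℝ := sSup (Subtype.val '' E) with hs
    have hbdd : BddAbove (Subtype.val '' E) := by
      refine ⟨1, fun y hy => ?_⟩
      obtain ⟨w, _, rfl⟩ := hy
      exact w.2.2
    have hEne' : (Subtype.val '' E).Nonempty := hEne.image _
    have hs0 : 0 ≤ s := by
      obtain ⟨w, hw⟩ := hEne
      exact le_trans w.2.1 (le_csSup hbdd ⟨w, hw, rfl⟩)
    have hs1 : s ≤ 1 := csSup_le hEne' (by rintro y ⟨w, _, rfl⟩; exact w.2.2)
    set sI : unitInterval := ⟨s, hs0, hs1⟩ with hsI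
    have hle_s : ∀ w : unitInterval, w ∈ E → (w:ℝ) ≤ s :=
      fun w hw => le_csSup hbdd ⟨w, hw, rfl⟩
    by_cases hsE : sI ∈ E
    · -- E = Iic sI
      have hEeq : E = Set.Iic sI := by
        ext w
        constructor
        · intro hw
          exact hle_s w hw
        · intro hw
          exact hEl hw hsE
      have hq1 : ∀ x, (K x) E ≤ 1 := fun x => by
        have : IsProbabilityMeasure (K x) := hK.isProbabilityMeasure x
        exact prob_le_one
      have hint : ∫⁻ x, (K x) E ∂P ≤ ENNReal.ofReal s := by
        calc ∫⁻ x, (K x) E ∂P = ∫⁻ x, (K x) (Set.Iic sI) ∂P := by rw [hEeq]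
          _ ≤ ENNReal.ofReal (sI : ℝ) := hPker sI
      calc ∫⁻ x, ENNReal.ofReal (binTail n k ((K x) E).toReal) ∂P
          ≤ ENNReal.ofReal (fnk n k s) :=
            main_estimate n k hk1 hkn P _ (K.measurable_coe hE) hq1 hs0 hs1 hint
        _ ≤ ENNReal.ofReal (f sI : ℝ) := ENNReal.ofReal_le_ofReal (hfnk sI)
        _ ≤ ENNReal.ofReal (α : ℝ) := ENNReal.ofReal_le_ofReal hsE
    · -- E = ⋃ m, Iic (wm m)
      obtain ⟨u, humono, hutend, humem⟩ := exists_seq_tendsto_sSup hEne' hbdd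
      have hu01 : ∀ m, 0 ≤ u m ∧ u m ≤ 1 := by
        intro m
        obtain ⟨w, _, hww⟩ := humem m
        exact hww ▸ ⟨w.2.1, w.2.2⟩
      set wm : ℕ → unitInterval := fun m => ⟨u m, (hu01 m).1, (hu01 m).2⟩ with hwm
      have hwmE : ∀ m, wm m ∈ E := by
        intro m
        obtain ⟨w, hwE, hww⟩ := humem m
        have : wm m = w := Subtype.ext hww.symm
        rw [this]; exact hwE
      have hwmono : Monotone wm := fun a b hab => by
        simp only [hwm, Subtype.mk_le_mk]
        exact humono hab
      have hEun : E = ⋃ m, Set.Iic (wm m) := by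
        ext w
        simp only [Set.mem_iUnion, Set.mem_Iic]
        constructor
        · intro hw
          have hws : (w:ℝ) ≤ s := hle_s w hw
          have hwlt : (w:ℝ) < s := by
            rcases eq_or_lt_of_le hws with heq | h
            · exact absurd (show sI = w from Subtype.ext heq.symm) (fun hh => hsE (hh ▸ hw))
            · exact h
          obtain ⟨m, hm⟩ := (hutend.eventually_const_lt hwlt).exists
          exact ⟨m, le_of_lt hm⟩
        · rintro ⟨m, hm⟩
          exact hEl hm (hwmE m)
      -- K x E = ⨆ m, K x (Iic (wm m))
      have hqsup : ∀ x, (K x) E = ⨆ m, (K x) (Set.Iic (wm m)) := by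
        intro x
        rw [hEun]
        have hmono : Monotone fun m => Set.Iic (wm m) :=
          fun a b hab => Set.Iic_subset_Iic.mpr (hwmono hab)
        exact Directed.measure_iUnion hmono.directed_le
      -- pointwise sup exchange for binTail
      have hFsup : ∀ x, ENNReal.ofReal (binTail n k ((K x) E).toReal)
          = ⨆ m, ENNReal.ofReal (binTail n k ((K x) (Set.Iic (wm m))).toReal) := by
        intro x
        have : IsProbabilityMeasure (K x) := hK.isProbabilityMeasure x
        have hqm_mono : Monotone (fun m => (K x) (Set.Iic (wm m))) :=
          fun a b hab => measure_mono (Set.Iic_subset_Iic.mpr (hwmono hab))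
        have hqlim : Filter.Tendsto (fun m => (K x) (Set.Iic (wm m))) Filter.atTop
            (nhds ((K x) E)) := by
          rw [hqsup x]
          exact tendsto_atTop_iSup hqm_mono
        have hne : (K x) E ≠ ⊤ := (measure_lt_top _ _).ne
        have htReal : Filter.Tendsto (fun m => ((K x) (Set.Iic (wm m))).toReal) Filter.atTop
            (nhds (((K x) E).toReal)) := (ENNReal.tendsto_toReal hne).comp hqlim
        have hcont : Filter.Tendsto
            (fun m => ENNReal.ofReal (binTail n k (((K x) (Set.Iic (wm m))).toReal)))
            Filter.atTop (nhds (ENNReal.ofReal (binTail n k (((K x) E).toReal)))) :=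
          (ENNReal.continuous_ofReal.tendsto _).comp
            (((binTail_continuous n k).tendsto _).comp htReal)
        have hmono2 : Monotone
            (fun m => ENNReal.ofReal (binTail n k (((K x) (Set.Iic (wm m))).toReal))) := by
          intro a b hab
          apply ENNReal.ofReal_le_ofReal
          apply binTail_monotoneOn n k hk1 hkn
          · constructor
            · exact ENNReal.toReal_nonneg
            · rw [← ENNReal.toReal_one]
              exact ENNReal.toReal_mono ENNReal.one_ne_top prob_le_one
          · constructor
            · exact ENNReal.toReal_nonneg
            · rw [← ENNReal.toReal_one]
              exact ENNReal.toReal_mono ENNReal.one_ne_top prob_le_one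
          · exact ENNReal.toReal_mono (measure_lt_top _ _).ne (hqm_mono hab)
        exact (iSup_eq_of_tendsto hmono2 hcont).symm
      rw [lintegral_congr hFsup]
      rw [lintegral_iSup]
      · apply iSup_le
        intro m
        have hq1 : ∀ x, (K x) (Set.Iic (wm m)) ≤ 1 := fun x => by
          have : IsProbabilityMeasure (K x) := hK.isProbabilityMeasure x
          exact prob_le_one
        calc ∫⁻ x, ENNReal.ofReal (binTail n k ((K x) (Set.Iic (wm m))).toReal) ∂P
            ≤ ENNReal.ofReal (fnk n k (u m)) :=
              main_estimate n k hk1 hkn P _ (K.measurable_coe measurableSet_Iic) hq1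
                (hu01 m).1 (hu01 m).2 (hPker (wm m))
          _ ≤ ENNReal.ofReal (f (wm m) : ℝ) := ENNReal.ofReal_le_ofReal (hfnk (wm m))
          _ ≤ ENNReal.ofReal (α : ℝ) := ENNReal.ofReal_le_ofReal (hwmE m)
      · intro m
        exact ENNReal.measurable_ofReal.comp ((binTail_continuous n k).measurable.comp
          (ENNReal.measurable_toReal.comp (K.measurable_coe measurableSet_Iic)))
      · intro a b hab x
        apply ENNReal.ofReal_le_ofReal
        apply binTail_monotoneOn n k hk1 hkn
        · exact ⟨ENNReal.toReal_nonneg, by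
            have : IsProbabilityMeasure (K x) := hK.isProbabilityMeasure x
            rw [← ENNReal.toReal_one]
            exact ENNReal.toReal_mono ENNReal.one_ne_top prob_le_one⟩
        · exact ⟨ENNReal.toReal_nonneg, by
            have : IsProbabilityMeasure (K x) := hK.isProbabilityMeasure x
            rw [← ENNReal.toReal_one]
            exact ENNReal.toReal_mono ENNReal.one_ne_top prob_le_one⟩
        · exact ENNReal.toReal_mono (measure_lt_top _ _).ne
            (measure_mono (Set.Iic_subset_Iic.mpr (hwmono hab)))

lemma necessity (n k : ℕ) (hk1 : 1 ≤ k) (hkn : k ≤ n)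
    (f : unitInterval → unitInterval) (hf : Monotone f)
    (hyp : ∀ (X : Type) (_ : MeasurableSpace X) (P : Measure X), IsProbabilityMeasure P →
      ∀ K : Kernel X unitInterval, IsMarkovKernel K →
        (∀ α : unitInterval, ∫⁻ x, K x (Set.Iic α) ∂P ≤ ENNReal.ofReal (α : ℝ)) →
        ∀ α : unitInterval,
          ∫⁻ x, (Measure.pi fun _ : Fin n => K x).map
              (fun u : Fin n → unitInterval => f (orderStat k u 0)) (Set.Iic α) ∂P
            ≤ ENNReal.ofReal (α : ℝ)) :
    ∀ u : unitInterval, fnk n k (u : ℝ) ≤ (f u : ℝ) := by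
  intro u
  rcases eq_or_lt_of_le u.2.1 with hu0 | hu0
  · -- u = 0
    rw [fnk, ← hu0, zero_mul]
    exact (f u).2.1
  -- key bound : for every p ∈ [u,1], (u/p) * binTail n k p ≤ f u
  have key : ∀ p : ℝ, (u:ℝ) ≤ p → p ≤ 1 → (u:ℝ)/p * binTail n k p ≤ (f u : ℝ) := by
    intro p hup hp1
    have hp0 : 0 < p := lt_of_lt_of_le hu0 hup
    set θ : ℝ := (u:ℝ)/p with hθ
    have hθ0 : 0 ≤ θ := by positivity
    have hθ1 : θ ≤ 1 := by
      rw [hθ, div_le_one hp0]; exact hup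
    have hθp : θ * p = (u:ℝ) := div_mul_cancel₀ _ (ne_of_gt hp0)
    set μ₁ : Measure unitInterval :=
      ENNReal.ofReal p • Measure.dirac u + ENNReal.ofReal (1-p) • Measure.dirac 1 with hμ₁
    haveI hμ₁prob : IsProbabilityMeasure μ₁ := by
      constructor
      rw [hμ₁]
      simp only [Measure.add_apply, Measure.smul_apply, smul_eq_mul, measure_univ, mul_one]
      rw [← ENNReal.ofReal_add hp0.le (by linarith), show p + (1-p) = 1 by ring,
        ENNReal.ofReal_one]
    set K : Kernel ℝ unitInterval :=
      Kernel.piecewise (measurableSet_Iic (a := θ)) (Kernel.const ℝ μ₁)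
        (Kernel.const ℝ (Measure.dirac (1:unitInterval))) with hKdef
    haveI hKM : IsMarkovKernel K := by
      rw [hKdef]; infer_instance
    set P : Measure ℝ := volume.restrict (Set.Icc 0 1) with hP
    haveI hPprob : IsProbabilityMeasure P := by
      constructor
      rw [hP, Measure.restrict_apply_univ, Real.volume_Icc]
      norm_num
    have hPIic : P (Set.Iic θ) = ENNReal.ofReal θ := by
      rw [hP, Measure.restrict_apply measurableSet_Iic]
      have : Set.Iic θ ∩ Set.Icc 0 1 = Set.Icc 0 θ := by
        ext z
        simp only [Set.mem_inter_iff, Set.mem_Iic, Set.mem_Icc]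
        constructor
        · rintro ⟨h1, h2, h3⟩; exact ⟨h2, h1⟩
        · rintro ⟨h1, h2⟩; exact ⟨h2, h1, h2.trans hθ1⟩
      rw [this, Real.volume_Icc, sub_zero]
    have hPker : ∀ α : unitInterval, ∫⁻ x, K x (Set.Iic α) ∂P ≤ ENNReal.ofReal (α : ℝ) := by
      intro α
      by_cases hα1 : (1:unitInterval) ≤ α
      · -- α = 1
        have hα1' : (α:ℝ) = 1 := le_antisymm α.2.2 hα1
        calc ∫⁻ x, K x (Set.Iic α) ∂P ≤ ∫⁻ _, 1 ∂P := by
              apply lintegral_mono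
              intro x
              have : IsProbabilityMeasure (K x) := hKM.isProbabilityMeasure x
              exact prob_le_one
          _ = 1 := by rw [lintegral_one, measure_univ]
          _ ≤ ENNReal.ofReal (α : ℝ) := by rw [hα1', ENNReal.ofReal_one]
      · have hc₂ : Measure.dirac (1:unitInterval) (Set.Iic α) = 0 := by
          rw [Measure.dirac_apply' _ measurableSet_Iic]
          simp only [Set.indicator_apply, Set.mem_Iic]
          rw [if_neg hα1]
        have hsplit : ∫⁻ x, K x (Set.Iic α) ∂P
            = μ₁ (Set.Iic α) * P (Set.Iic θ) + 0 * P ((Set.Iic θ)ᶜ) := by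
          rw [← lintegral_add_compl (fun x => K x (Set.Iic α)) (measurableSet_Iic (a := θ))]
          congr 1
          · rw [setLIntegral_congr_fun measurableSet_Iic
              ((fun x hx => by
                rw [hKdef, Kernel.piecewise_apply, if_pos hx, Kernel.const_apply]))]
            rw [setLIntegral_const]
          · rw [setLIntegral_congr_fun measurableSet_Iic.compl
              ((fun x hx => by
                rw [hKdef, Kernel.piecewise_apply, if_neg hx, Kernel.const_apply, hc₂]))]
            rw [setLIntegral_const]
        rw [hsplit, zero_mul, add_zero]
        by_cases hαu : u ≤ α
        · have hc₁ : μ₁ (Set.Iic α) = ENNReal.ofReal p := by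
            rw [hμ₁]
            simp only [Measure.add_apply, Measure.smul_apply, smul_eq_mul]
            rw [Measure.dirac_apply' _ measurableSet_Iic, Measure.dirac_apply' _ measurableSet_Iic]
            simp only [Set.indicator_apply, Set.mem_Iic]
            rw [if_pos hαu, if_neg hα1]
            simp
          rw [hc₁, hPIic, ← ENNReal.ofReal_mul hp0.le, mul_comm p θ, hθp]
          exact ENNReal.ofReal_le_ofReal hαu
        · have hc₁ : μ₁ (Set.Iic α) = 0 := by
            rw [hμ₁]
            simp only [Measure.add_apply, Measure.smul_apply, smul_eq_mul]
            rw [Measure.dirac_apply' _ measurableSet_Iic, Measure.dirac_apply' _ measurableSet_Iic]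
            simp only [Set.indicator_apply, Set.mem_Iic]
            rw [if_neg hαu, if_neg hα1]
            simp
          rw [hc₁, zero_mul]
          exact zero_le
    have hcon := hyp ℝ inferInstance P hPprob K hKM hPker (f u)
    -- lower bound the left-hand side
    set g : (Fin n → unitInterval) → unitInterval := fun v => f (orderStat k v 0) with hg
    have hgm : Measurable g := (hf.measurable).comp (measurable_orderStat hk1 hkn 0)
    have hμIic : μ₁ (Set.Iic u) = ENNReal.ofReal p := by
      rw [hμ₁]
      simp only [Measure.add_apply, Measure.smul_apply, smul_eq_mul]
      rw [Measure.dirac_apply' _ measurableSet_Iic, Measure.dirac_apply' _ measurableSet_Iic]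
      simp only [Set.indicator_apply, Set.mem_Iic]
      rw [if_pos (le_refl u)]
      by_cases hu1 : (1:unitInterval) ≤ u
      · have h1u : (1:ℝ) ≤ (u:ℝ) := by exact_mod_cast hu1
        have hp1' : p = 1 := le_antisymm hp1 (by linarith)
        rw [if_pos hu1, hp1']
        simp
      · rw [if_neg hu1]
        simp
    have hcval : (Measure.pi fun _ : Fin n => μ₁).map g (Set.Iic (f u))
        ≥ ENNReal.ofReal (binTail n k p) := by
      rw [Measure.map_apply hgm measurableSet_Iic]
      have hsub : {v : Fin n → unitInterval |
          k ≤ (Finset.univ.filter (fun i => v i ∈ Set.Iic u)).card} ⊆ g ⁻¹' (Set.Iic (f u)) := by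
        intro v hv
        simp only [Set.mem_setOf_eq] at hv
        have : orderStat k v 0 ∈ Set.Iic u :=
          (orderStat_mem_lower_iff hk1 hkn (isLowerSet_Iic u) v 0).mpr hv
        simp only [Set.mem_preimage, Set.mem_Iic, hg]
        exact hf this
      calc ENNReal.ofReal (binTail n k p)
          = ENNReal.ofReal (binTail n k (μ₁ (Set.Iic u)).toReal) := by
            rw [hμIic, ENNReal.toReal_ofReal hp0.le]
        _ = Measure.pi (fun _ : Fin n => μ₁) {v : Fin n → unitInterval |
              k ≤ (Finset.univ.filter (fun i => v i ∈ Set.Iic u)).card} := by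
            rw [← binom_bridge n k hk1 μ₁ measurableSet_Iic,
              ← pi_card_filter n k μ₁ measurableSet_Iic]
            congr!
        _ ≤ _ := measure_mono hsub
    have hlow : ENNReal.ofReal (θ * binTail n k p)
        ≤ ∫⁻ x, (Measure.pi fun _ : Fin n => K x).map g (Set.Iic (f u)) ∂P := by
      have h1 : ∫⁻ x in Set.Iic θ, (Measure.pi fun _ : Fin n => K x).map g (Set.Iic (f u)) ∂P
          ≤ ∫⁻ x, (Measure.pi fun _ : Fin n => K x).map g (Set.Iic (f u)) ∂P :=
        setLIntegral_le_lintegral _ _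
      refine le_trans ?_ h1
      rw [setLIntegral_congr_fun measurableSet_Iic
        ((fun x hx => by
          rw [hKdef, Kernel.piecewise_apply, if_pos hx, Kernel.const_apply]))]
      rw [setLIntegral_const, hPIic]
      rw [ENNReal.ofReal_mul hθ0, mul_comm]
      exact mul_le_mul_left hcval _
    have := le_trans hlow hcon
    rw [ENNReal.ofReal_le_ofReal_iff (f u).2.1] at this
    calc (u:ℝ)/p * binTail n k p = θ * binTail n k p := by rw [hθ]
      _ ≤ (f u : ℝ) := this
  -- conclude fnk ≤ f u
  rw [fnk]
  have himg : (psi n k '' Set.Icc (u:ℝ) 1).Nonempty :=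
    ⟨psi n k 1, Set.mem_image_of_mem _ ⟨u.2.2, le_refl 1⟩⟩
  have hub : ∀ y ∈ psi n k '' Set.Icc (u:ℝ) 1, y ≤ (f u : ℝ) / (u:ℝ) := by
    rintro y ⟨p, hp, rfl⟩
    have hp0 : 0 < p := lt_of_lt_of_le hu0 hp.1
    have hkey := key p hp.1 hp.2
    rw [psi, if_neg (ne_of_gt hp0), le_div_iff₀ hu0]
    calc p⁻¹ * binTail n k p * (u:ℝ) = (u:ℝ)/p * binTail n k p := by field_simp
      _ ≤ (f u : ℝ) := hkey
  calc (u:ℝ) * sSup (psi n k '' Set.Icc (u:ℝ) 1) ≤ (u:ℝ) * ((f u : ℝ) / (u:ℝ)) := by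
        apply mul_le_mul_of_nonneg_left (csSup_le himg hub) hu0.le
    _ = (f u : ℝ) := by field_simp

/-- **Main theorem.**  For an increasing `f : [0,1] → [0,1]`, the kernel
`K_{n,k,f}(x,·) = (f ∘ U_{k:n})_* (K(x,·)^{⊗n})` is a P-kernel for every probability `P`
and every P-kernel `K` for `P`, if and only if `f ≥ f_{n,k}` on `[0,1]`. -/
theorem combining_pvariables_main (n k : ℕ) (hk1 : 1 ≤ k) (hkn : k ≤ n)
    (f : unitInterval → unitInterval) (hf : Monotone f) :
    (∀ (X : Type) (_ : MeasurableSpace X) (P : Measure X), IsProbabilityMeasure P →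
      ∀ K : Kernel X unitInterval, IsMarkovKernel K →
        (∀ α : unitInterval, ∫⁻ x, K x (Set.Iic α) ∂P ≤ ENNReal.ofReal (α : ℝ)) →
        ∀ α : unitInterval,
          ∫⁻ x, (Measure.pi fun _ : Fin n => K x).map
              (fun u : Fin n → unitInterval => f (orderStat k u 0)) (Set.Iic α) ∂P
            ≤ ENNReal.ofReal (α : ℝ))
    ↔ ∀ u : unitInterval, fnk n k (u : ℝ) ≤ (f u : ℝ) := by
  constructor
  · intro hyp
    exact necessity n k hk1 hkn f hf hyp
  · intro hfnk X mX P hP K hK hPker α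
    exact sufficiency n k hk1 hkn f hf hfnk X mX P hP K hK hPker α
end

section
/- Let n ∈ ℕ and 1 ≤ k ≤ n. Then (n/k)/(1 + 5 k^{-1/3}) ≤ c_{n,k} ≤ n/k. -/
set_option maxHeartbeats 1000000


open MeasureTheory

/-- `c_{n,k} = sup_{p ∈ [0,1]} ψ_{n,k}(p)`. -/
noncomputable def cnk (n k : ℕ) : ℝ := sSup (psi n k '' Set.Icc 0 1)

lemma sum_w (n : ℕ) (p q : ℝ) :
    ∑ j ∈ Finset.range (n+1), (n.choose j : ℝ) * p ^ j * q ^ (n - j) = (p + q)^n := by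
  rw [add_pow]
  exact Finset.sum_congr rfl fun j hj => by ring

lemma sum_jw (n : ℕ) (p q : ℝ) :
    ∑ j ∈ Finset.range (n+1), (j : ℝ) * (n.choose j : ℝ) * p ^ j * q ^ (n - j)
      = n * p * (p + q)^(n-1) := by
  cases n with
  | zero => simp
  | succ m =>
    rw [Finset.sum_range_succ']
    simp only [Nat.cast_zero, zero_mul, add_zero, Nat.succ_sub_succ]
    have key : ∀ i ∈ Finset.range (m+1),
        ((i+1 : ℕ) : ℝ) * ((m+1).choose (i+1) : ℝ) * p ^ (i+1) * q ^ (m - i)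
          = ((m+1 : ℕ) : ℝ) * p * ((m.choose i : ℝ) * p ^ i * q ^ (m - i)) := by
      intro i _
      have h := Nat.add_one_mul_choose_eq m i
      have h2 : ((m+1 : ℕ) : ℝ) * (m.choose i : ℝ) = ((m+1).choose (i+1) : ℝ) * ((i+1 : ℕ) : ℝ) := by
        exact_mod_cast congrArg Nat.cast h
      linear_combination (-(p^(i+1) * q^(m-i))) * h2
    rw [Finset.sum_congr rfl key, ← Finset.mul_sum, sum_w m p q]
    simp

lemma sum_j2w (n : ℕ) (p q : ℝ) :
    ∑ j ∈ Finset.range (n+1), (j : ℝ) * ((j : ℝ) - 1) * (n.choose j : ℝ) * p ^ j * q ^ (n - j)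
      = n * ((n : ℝ) - 1) * p^2 * (p + q)^(n-2) := by
  cases n with
  | zero => simp
  | succ m =>
    rw [Finset.sum_range_succ']
    simp only [Nat.cast_zero, zero_mul, add_zero, Nat.succ_sub_succ]
    have key : ∀ i ∈ Finset.range (m+1),
        ((i+1 : ℕ) : ℝ) * (((i+1 : ℕ) : ℝ) - 1) * ((m+1).choose (i+1) : ℝ) * p ^ (i+1) * q ^ (m - i)
          = ((m+1 : ℕ) : ℝ) * p * ((i : ℝ) * (m.choose i : ℝ) * p ^ i * q ^ (m - i)) := by
      intro i _
      have h2 : ((m+1 : ℕ) : ℝ) * (m.choose i : ℝ) = ((m+1).choose (i+1) : ℝ) * ((i+1 : ℕ) : ℝ) := by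
        exact_mod_cast congrArg Nat.cast (Nat.add_one_mul_choose_eq m i)
      push_cast
      push_cast at h2
      linear_combination (-((i:ℝ) * p^(i+1) * q^(m-i))) * h2
    rw [Finset.sum_congr rfl key, ← Finset.mul_sum, sum_jw m p q]
    push_cast
    ring_nf

lemma var_binom (n : ℕ) (p : ℝ) :
    ∑ j ∈ Finset.range (n+1), ((j : ℝ) - n*p)^2 * ((n.choose j : ℝ) * p ^ j * (1-p) ^ (n - j))
      = n * p * (1-p) := by
  have hpq : p + (1 - p) = 1 := by ring
  have h0 := sum_w n p (1-p)
  have h1 := sum_jw n p (1-p)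
  have h2 := sum_j2w n p (1-p)
  rw [hpq, one_pow] at h0 h1 h2
  have expand : ∀ j ∈ Finset.range (n+1),
      ((j : ℝ) - n*p)^2 * ((n.choose j : ℝ) * p ^ j * (1-p) ^ (n - j))
        = ((j : ℝ) * ((j : ℝ) - 1) * (n.choose j : ℝ) * p ^ j * (1-p) ^ (n - j))
          + (1 - 2*(n*p)) * ((j : ℝ) * (n.choose j : ℝ) * p ^ j * (1-p) ^ (n - j))
          + (n*p)^2 * ((n.choose j : ℝ) * p ^ j * (1-p) ^ (n - j)) := by
    intro j _; ring
  rw [Finset.sum_congr rfl expand, Finset.sum_add_distrib, Finset.sum_add_distrib,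
    ← Finset.mul_sum, ← Finset.mul_sum, h0, h1, h2]
  ring

lemma w_nonneg (n j : ℕ) {p : ℝ} (hp0 : 0 ≤ p) (hp1 : p ≤ 1) :
    0 ≤ (n.choose j : ℝ) * p ^ j * (1 - p) ^ (n - j) := by
  have : (0:ℝ) ≤ 1 - p := by linarith
  positivity

lemma tail_split (n k : ℕ) (p : ℝ) (hk : k ≤ n+1) :
    (∑ j ∈ Finset.range k, (n.choose j : ℝ) * p ^ j * (1 - p) ^ (n - j)) + binTail n k p
      = ∑ j ∈ Finset.range (n+1), (n.choose j : ℝ) * p ^ j * (1 - p) ^ (n - j) := by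
  unfold binTail
  rw [← Finset.Ico_add_one_right_eq_Icc, Finset.range_eq_Ico, Finset.range_eq_Ico]
  exact Finset.sum_Ico_consecutive (fun j => (n.choose j : ℝ) * p ^ j * (1 - p) ^ (n - j)) (Nat.zero_le k) hk

lemma sum_w_one (n : ℕ) (p : ℝ) :
    ∑ j ∈ Finset.range (n+1), (n.choose j : ℝ) * p ^ j * (1 - p) ^ (n - j) = 1 := by
  have := sum_w n p (1-p)
  simpa using this

lemma markov (n k : ℕ) {p : ℝ} (hp0 : 0 ≤ p) (hp1 : p ≤ 1) :
    (k:ℝ) * binTail n k p ≤ n * p := by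
  have h1 := sum_jw n p (1-p)
  rw [show p + (1-p) = 1 by ring, one_pow, mul_one] at h1
  calc (k:ℝ) * binTail n k p
      = ∑ j ∈ Finset.Icc k n, (k:ℝ) * ((n.choose j : ℝ) * p ^ j * (1 - p) ^ (n - j)) := by
        rw [binTail, Finset.mul_sum]
    _ ≤ ∑ j ∈ Finset.Icc k n, (j:ℝ) * ((n.choose j : ℝ) * p ^ j * (1 - p) ^ (n - j)) := by
        refine Finset.sum_le_sum fun j hj => ?_
        have := (Finset.mem_Icc.mp hj).1
        exact mul_le_mul_of_nonneg_right (by exact_mod_cast this) (w_nonneg n j hp0 hp1)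
    _ ≤ ∑ j ∈ Finset.range (n+1), (j:ℝ) * ((n.choose j : ℝ) * p ^ j * (1 - p) ^ (n - j)) := by
        refine Finset.sum_le_sum_of_subset_of_nonneg ?_ fun j hj _ => ?_
        · intro j hj
          have := (Finset.mem_Icc.mp hj).2
          exact Finset.mem_range.mpr (by omega)
        · have : (0:ℝ) ≤ (j:ℝ) := Nat.cast_nonneg j
          exact mul_nonneg this (w_nonneg n j hp0 hp1)
    _ = n * p := by rw [← h1]; exact Finset.sum_congr rfl fun j _ => by ring

lemma cheb (n k : ℕ) {p : ℝ} (hp0 : 0 ≤ p) (hp1 : p ≤ 1) (hk : k ≤ n+1)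
    (hμ : (k:ℝ) - 1 < n*p) :
    ((n*p) - ((k:ℝ)-1))^2 * ∑ j ∈ Finset.range k, (n.choose j : ℝ) * p ^ j * (1 - p) ^ (n - j)
      ≤ n * p * (1-p) := by
  calc ((n*p) - ((k:ℝ)-1))^2 * ∑ j ∈ Finset.range k, (n.choose j : ℝ) * p ^ j * (1 - p) ^ (n - j)
      = ∑ j ∈ Finset.range k, ((n*p) - ((k:ℝ)-1))^2 * ((n.choose j : ℝ) * p ^ j * (1 - p) ^ (n - j)) := by
        rw [Finset.mul_sum]
    _ ≤ ∑ j ∈ Finset.range k, ((j:ℝ) - n*p)^2 * ((n.choose j : ℝ) * p ^ j * (1 - p) ^ (n - j)) := by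
        refine Finset.sum_le_sum fun j hj => ?_
        have hjk : (j:ℝ) ≤ (k:ℝ) - 1 := by
          have := Finset.mem_range.mp hj
          have : (j:ℝ) + 1 ≤ (k:ℝ) := by exact_mod_cast this
          linarith
        have h1 : ((n*p) - ((k:ℝ)-1))^2 ≤ ((j:ℝ) - n*p)^2 := by nlinarith
        exact mul_le_mul_of_nonneg_right h1 (w_nonneg n j hp0 hp1)
    _ ≤ ∑ j ∈ Finset.range (n+1), ((j:ℝ) - n*p)^2 * ((n.choose j : ℝ) * p ^ j * (1 - p) ^ (n - j)) := by
        refine Finset.sum_le_sum_of_subset_of_nonneg (Finset.range_subset_range.mpr hk) fun j hj _ => ?_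
        exact mul_nonneg (sq_nonneg _) (w_nonneg n j hp0 hp1)
    _ = n * p * (1-p) := var_binom n p

/-- Bounds for `c_{n,k}`:  `(n/k)/(1 + 5 k^{-1/3}) ≤ c_{n,k} ≤ n/k`. -/
theorem cnk_bounds (n k : ℕ) (hk1 : 1 ≤ k) (hkn : k ≤ n) :
    ((n : ℝ) / k) / (1 + 5 * (k : ℝ) ^ (-(1/3) : ℝ)) ≤ cnk n k ∧
    cnk n k ≤ (n : ℝ) / k := by
  have hK1 : (1:ℝ) ≤ (k:ℝ) := by exact_mod_cast hk1
  have hK0 : (0:ℝ) < (k:ℝ) := by linarith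
  have hNK : (k:ℝ) ≤ (n:ℝ) := by exact_mod_cast hkn
  have hN0 : (0:ℝ) < (n:ℝ) := by linarith
  have hnk0 : (0:ℝ) ≤ (n:ℝ)/k := by positivity
  -- pointwise upper bound
  have hub : ∀ x ∈ psi n k '' Set.Icc (0:ℝ) 1, x ≤ (n:ℝ)/k := by
    rintro x ⟨p, ⟨hp0, hp1⟩, rfl⟩
    by_cases hp : p = 0
    · subst hp
      rw [psi, if_pos rfl]
      by_cases hk : k = 1
      · rw [if_pos hk, hk]; simp
      · rw [if_neg hk]; exact hnk0
    · have hppos : 0 < p := lt_of_le_of_ne hp0 (Ne.symm hp)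
      rw [psi, if_neg hp]
      have hm := markov n k hp0 hp1
      have hB : binTail n k p ≤ (n:ℝ)*p/(k:ℝ) := by
        rw [le_div_iff₀ hK0]; linarith
      calc p⁻¹ * binTail n k p ≤ p⁻¹ * ((n:ℝ)*p/(k:ℝ)) := by
            exact mul_le_mul_of_nonneg_left hB (by positivity)
        _ = (n:ℝ)/k := by field_simp
  have hbdd : BddAbove (psi n k '' Set.Icc (0:ℝ) 1) := ⟨(n:ℝ)/k, fun x hx => hub x hx⟩
  have hupper : cnk n k ≤ (n:ℝ)/k := Real.sSup_le hub hnk0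
  refine ⟨?_, hupper⟩
  -- set up s
  set s : ℝ := (k:ℝ) ^ ((1:ℝ)/3) with hs_def
  have hs1 : 1 ≤ s := Real.one_le_rpow hK1 (by norm_num)
  have hs0 : 0 < s := by linarith
  have hs3 : s^3 = (k:ℝ) := by
    rw [hs_def, ← Real.rpow_natCast ((k:ℝ) ^ ((1:ℝ)/3)) 3, ← Real.rpow_mul hK0.le]
    norm_num
  have hneg : (k:ℝ) ^ (-(1/3) : ℝ) = s⁻¹ := by
    rw [show (-(1/3) : ℝ) = ((1:ℝ)/3) * (-1) by norm_num, Real.rpow_mul hK0.le,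
      Real.rpow_neg_one, hs_def]
  rw [hneg, ← hs3]
  have hEs : s^3 * (1 + 5*s⁻¹) = s^3 + 5*s^2 := by
    field_simp
  have hX : (n:ℝ)/s^3/(1+5*s⁻¹) = (n:ℝ)/(s^3+5*s^2) := by
    rw [div_div, hEs]
  rw [hX]
  by_cases hcase : (n:ℝ) ≤ s^3 + 5*s^2
  · -- use p = 1
    have hmem : psi n k 1 ∈ psi n k '' Set.Icc (0:ℝ) 1 :=
      ⟨1, ⟨zero_le_one, le_refl 1⟩, rfl⟩
    have hpsi1 : psi n k 1 = 1 := by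
      rw [psi, if_neg one_ne_zero, inv_one, one_mul, binTail]
      rw [Finset.sum_eq_single n]
      · simp
      · intro j hj hjn
        have hjn' : j < n := lt_of_le_of_ne (Finset.mem_Icc.mp hj).2 hjn
        have : n - j ≠ 0 := by omega
        simp [this]
      · intro h
        exact absurd (Finset.mem_Icc.mpr ⟨hkn, le_refl n⟩) h
    have h1 : (n:ℝ)/(s^3+5*s^2) ≤ 1 := by
      rw [div_le_one (by positivity)]; exact hcase
    calc (n:ℝ)/(s^3+5*s^2) ≤ 1 := h1
      _ = psi n k 1 := hpsi1.symm
      _ ≤ cnk n k := le_csSup hbdd hmem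
  · push_neg at hcase
    set p₀ : ℝ := (s^3 + 2*s^2)/(n:ℝ) with hp₀_def
    have hμpos : (0:ℝ) < s^3 + 2*s^2 := by positivity
    have hp₀pos : 0 < p₀ := by positivity
    have hp₀le : p₀ ≤ 1 := by
      rw [hp₀_def, div_le_one hN0]
      nlinarith [sq_nonneg s]
    have hnp₀ : (n:ℝ) * p₀ = s^3 + 2*s^2 := by
      rw [hp₀_def, mul_div_cancel₀ _ (ne_of_gt hN0)]
    have hμk : (k:ℝ) - 1 < (n:ℝ)*p₀ := by
      rw [hnp₀, ← hs3]; nlinarith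
    set H : ℝ := ∑ j ∈ Finset.range k, (n.choose j : ℝ) * p₀ ^ j * (1 - p₀) ^ (n - j) with hH_def
    have hH0 : 0 ≤ H :=
      Finset.sum_nonneg fun j _ => w_nonneg n j hp₀pos.le hp₀le
    have hch := cheb n k hp₀pos.le hp₀le (by omega) hμk
    rw [hnp₀, ← hH_def, ← hs3] at hch
    have hAH : (2*s^2+1)^2 * H ≤ s^3 + 2*s^2 := by
      have h1 : ((s^3 + 2*s^2) - (s^3-1))^2 = (2*s^2+1)^2 := by ring
      have h2 : (s^3 + 2*s^2) * (1 - p₀) ≤ s^3 + 2*s^2 := by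
        nlinarith [hp₀pos]
      calc (2*s^2+1)^2 * H = ((s^3 + 2*s^2) - (s^3-1))^2 * H := by rw [h1]
        _ ≤ (s^3 + 2*s^2) * (1-p₀) := hch
        _ ≤ s^3 + 2*s^2 := h2
    have hB : binTail n k p₀ = 1 - H := by
      have := tail_split n k p₀ (by omega)
      rw [sum_w_one, ← hH_def] at this
      linarith
    have hpsi : psi n k p₀ = ((n:ℝ)/(s^3+2*s^2)) * (1 - H) := by
      rw [psi, if_neg (ne_of_gt hp₀pos), hB, hp₀_def]
      rw [show ((s^3 + 2*s^2)/(n:ℝ))⁻¹ = (n:ℝ)/(s^3+2*s^2) by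
        rw [inv_div]]
    -- key polynomial inequality
    have hpoly : (s^3+2*s^2) * ((2*s^2+1)^2) + (s^3+2*s^2)*(s^3+5*s^2)
        ≤ (2*s^2+1)^2*(s^3+5*s^2) := by
      nlinarith [hs1, sq_nonneg s, pow_pos hs0 3, sq_nonneg (s-1), sq_nonneg (s^2-s)]
    have hstep2 : (s^3+2*s^2)/(s^3+5*s^2) ≤ 1 - H := by
      rw [div_le_iff₀ (by positivity)]
      have hA : (0:ℝ) < (2*s^2+1)^2 := by positivity
      nlinarith [mul_le_mul_of_nonneg_right hAH (show (0:ℝ) ≤ s^3+5*s^2 by positivity)]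
    have hmem : psi n k p₀ ∈ psi n k '' Set.Icc (0:ℝ) 1 :=
      ⟨p₀, ⟨hp₀pos.le, hp₀le⟩, rfl⟩
    calc (n:ℝ)/(s^3+5*s^2)
        = ((n:ℝ)/(s^3+2*s^2)) * ((s^3+2*s^2)/(s^3+5*s^2)) := by
          rw [div_mul_div_comm, mul_comm ((n:ℝ)) (s^3+2*s^2), mul_div_mul_left _ _ (ne_of_gt hμpos)]
      _ ≤ ((n:ℝ)/(s^3+2*s^2)) * (1 - H) :=
          mul_le_mul_of_nonneg_left hstep2 (by positivity)
      _ = psi n k p₀ := hpsi.symm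
      _ ≤ cnk n k := le_csSup hbdd hmem
end

section
/- Let n ∈ ℕ and 1 ≤ k ≤ n. Then for every u ∈ [0,1]: (min(1, nu/k))/(1 + 5 k^{-1/3}) ≤ f_{n,k}(u) ≤ min(1, c_{n,k} u) ≤ min(1, nu/k). -/
open MeasureTheory

namespace BinAux


open Finset

lemma sum_one (n : ℕ) (p : ℝ) :
    ∑ j ∈ Finset.range (n+1), (n.choose j : ℝ) * p ^ j * (1-p) ^ (n-j) = 1 := by
  calc ∑ j ∈ Finset.range (n+1), (n.choose j : ℝ) * p ^ j * (1-p) ^ (n-j)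
      = ∑ j ∈ Finset.range (n+1), p ^ j * (1-p) ^ (n-j) * (n.choose j : ℝ) := by
        apply Finset.sum_congr rfl; intros; ring
    _ = (p + (1-p)) ^ n := (add_pow p (1-p) n).symm
    _ = 1 := by norm_num

lemma sum_j (n : ℕ) (p : ℝ) :
    ∑ j ∈ Finset.range (n+1), (j : ℝ) * ((n.choose j : ℝ) * p ^ j * (1-p) ^ (n-j))
      = n * p := by
  cases n with
  | zero => simp
  | succ m =>
    rw [Finset.sum_range_succ']
    have key : ∀ i ∈ Finset.range (m+1),
        ((i+1 : ℕ) : ℝ) * (((m+1).choose (i+1) : ℝ) * p ^ (i+1) * (1-p) ^ (m+1-(i+1)))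
        = ((m+1 : ℕ) : ℝ) * p * ((m.choose i : ℝ) * p ^ i * (1-p) ^ (m-i)) := by
      intro i _
      have h : (m+1) * m.choose i = (m+1).choose (i+1) * (i+1) := Nat.add_one_mul_choose_eq m i
      have h' : ((m+1 : ℕ) : ℝ) * (m.choose i : ℝ)
          = ((m+1).choose (i+1) : ℝ) * ((i+1 : ℕ) : ℝ) := by exact_mod_cast congrArg Nat.cast h
      have hmi : m + 1 - (i+1) = m - i := by omega
      rw [hmi, pow_succ]
      push_cast at h' ⊢
      linear_combination (-(p ^ i * p * (1-p) ^ (m-i))) * h'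
    rw [Finset.sum_congr rfl key, ← Finset.mul_sum, sum_one m p]
    push_cast
    ring

lemma sum_jj (n : ℕ) (p : ℝ) :
    ∑ j ∈ Finset.range (n+1), (j : ℝ) * ((j:ℝ)-1) * ((n.choose j : ℝ) * p ^ j * (1-p) ^ (n-j))
      = n * ((n:ℝ)-1) * p^2 := by
  cases n with
  | zero => simp
  | succ m =>
    rw [Finset.sum_range_succ']
    have key : ∀ i ∈ Finset.range (m+1),
        ((i+1 : ℕ) : ℝ) * (((i+1 : ℕ):ℝ)-1) * (((m+1).choose (i+1) : ℝ) * p ^ (i+1) * (1-p) ^ (m+1-(i+1)))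
        = ((m+1 : ℕ) : ℝ) * p * ((i:ℝ) * ((m.choose i : ℝ) * p ^ i * (1-p) ^ (m-i))) := by
      intro i _
      have h : (m+1) * m.choose i = (m+1).choose (i+1) * (i+1) := Nat.add_one_mul_choose_eq m i
      have h' : ((m+1 : ℕ) : ℝ) * (m.choose i : ℝ)
          = ((m+1).choose (i+1) : ℝ) * ((i+1 : ℕ) : ℝ) := by exact_mod_cast congrArg Nat.cast h
      have hmi : m + 1 - (i+1) = m - i := by omega
      rw [hmi, pow_succ]
      push_cast at h' ⊢
      linear_combination (-((i:ℝ) * (p ^ i * p * (1-p) ^ (m-i)))) * h'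
    rw [Finset.sum_congr rfl key, ← Finset.mul_sum, sum_j m p]
    push_cast
    ring

lemma sum_sq (n : ℕ) (p : ℝ) :
    ∑ j ∈ Finset.range (n+1), ((n:ℝ)*p - j)^2 * ((n.choose j : ℝ) * p ^ j * (1-p) ^ (n-j))
      = n * p * (1-p) := by
  have key : ∀ j ∈ Finset.range (n+1),
      ((n:ℝ)*p - j)^2 * ((n.choose j : ℝ) * p ^ j * (1-p) ^ (n-j))
      = ((n:ℝ)*p)^2 * ((n.choose j : ℝ) * p ^ j * (1-p) ^ (n-j))
        - (2*(n:ℝ)*p - 1) * ((j:ℝ) * ((n.choose j : ℝ) * p ^ j * (1-p) ^ (n-j)))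
        + (j:ℝ) * ((j:ℝ)-1) * ((n.choose j : ℝ) * p ^ j * (1-p) ^ (n-j)) := by
    intro j _; ring
  rw [Finset.sum_congr rfl key]
  rw [Finset.sum_add_distrib, Finset.sum_sub_distrib, ← Finset.mul_sum, ← Finset.mul_sum,
    sum_one n p, sum_j n p, sum_jj n p]
  ring



lemma term_nonneg (n j : ℕ) {p : ℝ} (h0 : 0 ≤ p) (h1 : p ≤ 1) :
    0 ≤ (n.choose j : ℝ) * p ^ j * (1-p) ^ (n-j) := by
  have : (0:ℝ) ≤ 1 - p := by linarith
  positivity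

lemma split (n k : ℕ) (p : ℝ) (hkn : k ≤ n) :
    (∑ j ∈ Finset.range k, (n.choose j : ℝ) * p ^ j * (1-p) ^ (n-j)) + binTail n k p
      = ∑ j ∈ Finset.range (n+1), (n.choose j : ℝ) * p ^ j * (1-p) ^ (n-j) := by
  rw [binTail, Finset.range_eq_Ico, Finset.range_eq_Ico, ← Finset.Ico_add_one_right_eq_Icc]
  exact Finset.sum_Ico_consecutive (fun j => (n.choose j : ℝ) * p ^ j * (1-p) ^ (n-j)) (Nat.zero_le k) (by omega)

lemma binTail_nonneg (n k : ℕ) {p : ℝ} (h0 : 0 ≤ p) (h1 : p ≤ 1) : 0 ≤ binTail n k p :=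
  Finset.sum_nonneg fun j _ => term_nonneg n j h0 h1





lemma sum_one' (n : ℕ) (p : ℝ) :
    ∑ j ∈ Finset.range (n+1), (n.choose j : ℝ) * p ^ j * (1-p) ^ (n-j) = 1 := by
  calc ∑ j ∈ Finset.range (n+1), (n.choose j : ℝ) * p ^ j * (1-p) ^ (n-j)
      = ∑ j ∈ Finset.range (n+1), p ^ j * (1-p) ^ (n-j) * (n.choose j : ℝ) := by
        apply Finset.sum_congr rfl; intros; ring
    _ = (p + (1-p)) ^ n := (add_pow p (1-p) n).symm
    _ = 1 := by norm_num

lemma binTail_le_one (n k : ℕ) {p : ℝ} (hkn : k ≤ n) (h0 : 0 ≤ p) (h1 : p ≤ 1) :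
    binTail n k p ≤ 1 := by
  have hs := split n k p hkn
  rw [sum_one' n p] at hs
  have : 0 ≤ ∑ j ∈ Finset.range k, (n.choose j : ℝ) * p ^ j * (1-p) ^ (n-j) :=
    Finset.sum_nonneg fun j _ => term_nonneg n j h0 h1
  linarith

lemma markov (n k : ℕ) {p : ℝ} (h0 : 0 ≤ p) (h1 : p ≤ 1) :
    (k:ℝ) * binTail n k p ≤ n * p := by
  have h2 : (k:ℝ) * binTail n k p
      ≤ ∑ j ∈ Finset.Icc k n, (j:ℝ) * ((n.choose j : ℝ) * p ^ j * (1-p) ^ (n-j)) := by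
    rw [binTail, Finset.mul_sum]
    apply Finset.sum_le_sum
    intro j hj
    rw [Finset.mem_Icc] at hj
    have : (k:ℝ) ≤ j := by exact_mod_cast hj.1
    have ht := term_nonneg n j h0 h1
    nlinarith
  have h3 : ∑ j ∈ Finset.Icc k n, (j:ℝ) * ((n.choose j : ℝ) * p ^ j * (1-p) ^ (n-j))
      ≤ ∑ j ∈ Finset.range (n+1), (j:ℝ) * ((n.choose j : ℝ) * p ^ j * (1-p) ^ (n-j)) := by
    apply Finset.sum_le_sum_of_subset_of_nonneg
    · intro j hj; rw [Finset.mem_Icc] at hj; rw [Finset.mem_range]; omega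
    · intro j _ _
      exact mul_nonneg (Nat.cast_nonneg j) (term_nonneg n j h0 h1)
  calc (k:ℝ) * binTail n k p ≤ _ := h2
    _ ≤ _ := h3
    _ = n * p := sum_j n p

lemma cheb (n k : ℕ) {p : ℝ} (hkn : k ≤ n) (h0 : 0 ≤ p) (h1 : p ≤ 1)
    (h : (k:ℝ) < n*p + 1) :
    1 - n*p*(1-p)/(n*p+1-k)^2 ≤ binTail n k p := by
  have hd : (0:ℝ) < n*p+1-k := by linarith
  have hlow : (∑ j ∈ Finset.range k, (n.choose j : ℝ) * p ^ j * (1-p) ^ (n-j))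
      ≤ n*p*(1-p)/(n*p+1-k)^2 := by
    rw [div_eq_inv_mul, ← sum_sq n p]
    have step : (∑ j ∈ Finset.range k, (n.choose j : ℝ) * p ^ j * (1-p) ^ (n-j))
        ≤ ((n*p+1-k)^2)⁻¹ * ∑ j ∈ Finset.range k,
            ((n:ℝ)*p - j)^2 * ((n.choose j : ℝ) * p ^ j * (1-p) ^ (n-j)) := by
      rw [Finset.mul_sum]
      apply Finset.sum_le_sum
      intro j hj
      rw [Finset.mem_range] at hj
      have hjk : (j:ℝ) ≤ (k:ℝ) - 1 := by
        have : (j:ℝ) + 1 ≤ k := by exact_mod_cast hj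
        linarith
      have hsq : (n*p+1-k)^2 ≤ ((n:ℝ)*p - j)^2 := by nlinarith
      have ht := term_nonneg n j h0 h1
      rw [← mul_assoc]
      have h1le : (1:ℝ) ≤ ((n*p+1-k)^2)⁻¹ * ((n:ℝ)*p - j)^2 := by
        rw [← div_eq_inv_mul, le_div_iff₀ (by positivity)]
        linarith
      calc (n.choose j : ℝ) * p ^ j * (1-p) ^ (n-j)
          = 1 * ((n.choose j : ℝ) * p ^ j * (1-p) ^ (n-j)) := (one_mul _).symm
        _ ≤ _ := mul_le_mul_of_nonneg_right h1le ht
    refine step.trans ?_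
    apply mul_le_mul_of_nonneg_left _ (by positivity)
    apply Finset.sum_le_sum_of_subset_of_nonneg
    · intro j hj; rw [Finset.mem_range] at hj ⊢; omega
    · intro j _ _
      exact mul_nonneg (sq_nonneg _) (term_nonneg n j h0 h1)
  have hs := split n k p hkn
  rw [sum_one' n p] at hs
  linarith



lemma psi_le (n k : ℕ) (hk1 : 1 ≤ k) {p : ℝ} (h0 : 0 ≤ p) (h1 : p ≤ 1) :
    psi n k p ≤ (n:ℝ) / k := by
  have hk0 : (0:ℝ) < k := by exact_mod_cast hk1
  by_cases hp : p = 0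
  · subst hp
    rw [psi, if_pos rfl]
    by_cases hk : k = 1
    · simp [hk]
    · rw [if_neg hk]; positivity
  · have hp0 : 0 < p := lt_of_le_of_ne h0 (Ne.symm hp)
    rw [psi, if_neg hp]
    have hm := markov n k h0 h1
    calc p⁻¹ * binTail n k p ≤ p⁻¹ * ((n:ℝ)*p/k) := by
          apply mul_le_mul_of_nonneg_left _ (inv_nonneg.mpr h0)
          rw [le_div_iff₀ hk0]; linarith
      _ = (n:ℝ)/k := by field_simp

lemma psi_le_inv (n k : ℕ) (hkn : k ≤ n) {u p : ℝ} (hu : 0 < u) (hup : u ≤ p) (hp1 : p ≤ 1) :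
    psi n k p ≤ u⁻¹ := by
  have hp0 : 0 < p := lt_of_lt_of_le hu hup
  rw [psi, if_neg (ne_of_gt hp0)]
  calc p⁻¹ * binTail n k p ≤ p⁻¹ * 1 := by
        apply mul_le_mul_of_nonneg_left (binTail_le_one n k hkn hp0.le hp1) (inv_nonneg.mpr hp0.le)
    _ = p⁻¹ := mul_one _
    _ ≤ u⁻¹ := by
        apply inv_anti₀ hu hup

lemma key_ineq {e c : ℝ} (he0 : 0 < e) (he1 : e ≤ 1) (hc : 1 ≤ c) (h3 : e^3 * c = 1) :
    (1 + 2*e) * (2*e*c + 1)^2 ≤ (1 + 5*e) * ((2*e*c+1)^2 - c*(1+2*e)) := by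
  have h12 : e^3 * c^2 = c := by nlinarith [h3]
  have hek : e * c ≤ c := by nlinarith
  nlinarith [h12, hek, mul_pos he0 (lt_of_lt_of_le one_pos hc)]


end BinAux

open BinAux in
set_option maxHeartbeats 2000000 in
/-- Bounds for `f_{n,k}`:
`min(1, nu/k)/(1 + 5 k^{-1/3}) ≤ f_{n,k}(u) ≤ min(1, c_{n,k} u) ≤ min(1, nu/k)`. -/
theorem fnk_bounds (n k : ℕ) (hk1 : 1 ≤ k) (hkn : k ≤ n) :
    ∀ u ∈ Set.Icc (0:ℝ) 1,
      min 1 ((n : ℝ) * u / k) / (1 + 5 * (k : ℝ) ^ (-(1/3) : ℝ)) ≤ fnk n k u ∧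
      fnk n k u ≤ min 1 (cnk n k * u) ∧
      min 1 (cnk n k * u) ≤ min 1 ((n : ℝ) * u / k) := by
  intro u hu
  obtain ⟨hu0, hu1⟩ := hu
  have hk0 : (0:ℝ) < k := by exact_mod_cast hk1
  have hkr : (1:ℝ) ≤ k := by exact_mod_cast hk1
  have hnk : (k:ℝ) ≤ n := by exact_mod_cast hkn
  have hn0 : (0:ℝ) < n := lt_of_lt_of_le hk0 hnk
  -- boundedness facts
  have hbdd0 : BddAbove (psi n k '' Set.Icc (0:ℝ) 1) := by
    refine ⟨(n:ℝ)/k, ?_⟩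
    rintro x ⟨p, hp, rfl⟩
    exact psi_le n k hk1 hp.1 hp.2
  have hsub : psi n k '' Set.Icc u 1 ⊆ psi n k '' Set.Icc (0:ℝ) 1 :=
    Set.image_mono (Set.Icc_subset_Icc hu0 le_rfl)
  have hbddu : BddAbove (psi n k '' Set.Icc u 1) := hbdd0.mono hsub
  have hne : (psi n k '' Set.Icc u 1).Nonempty :=
    ⟨psi n k 1, Set.mem_image_of_mem _ ⟨hu1, le_rfl⟩⟩
  have hne0 : (psi n k '' Set.Icc (0:ℝ) 1).Nonempty :=
    ⟨psi n k 1, Set.mem_image_of_mem _ ⟨zero_le_one, le_rfl⟩⟩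
  -- c ≤ n/k
  have hcle : cnk n k ≤ (n:ℝ)/k := by
    apply csSup_le hne0
    rintro x ⟨p, hp, rfl⟩
    exact psi_le n k hk1 hp.1 hp.2
  -- f ≤ c * u
  have hflecu : fnk n k u ≤ cnk n k * u := by
    rw [fnk, cnk, mul_comm (sSup _) u]
    exact mul_le_mul_of_nonneg_left (csSup_le_csSup hbdd0 hne hsub) hu0
  -- f ≤ 1
  have hfle1 : fnk n k u ≤ 1 := by
    rcases eq_or_lt_of_le hu0 with h | h
    · rw [fnk, ← h, zero_mul]; exact zero_le_one
    · rw [fnk]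
      have hsup : sSup (psi n k '' Set.Icc u 1) ≤ u⁻¹ := by
        apply csSup_le hne
        rintro x ⟨p, hp, rfl⟩
        exact psi_le_inv n k hkn h hp.1 hp.2
      calc u * sSup (psi n k '' Set.Icc u 1) ≤ u * u⁻¹ :=
            mul_le_mul_of_nonneg_left hsup hu0
        _ = 1 := mul_inv_cancel₀ (ne_of_gt h)
  -- lower bound on f via chosen point
  have flow : ∀ p ∈ Set.Icc u 1, u * psi n k p ≤ fnk n k u := by
    intro p hp
    exact mul_le_mul_of_nonneg_left (le_csSup hbddu (Set.mem_image_of_mem _ hp)) hu0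
  -- epsilon facts
  obtain ⟨e, hedef⟩ : ∃ e : ℝ, (k : ℝ) ^ (-(1/3) : ℝ) = e := ⟨_, rfl⟩
  rw [hedef]
  have hepos : 0 < e := by rw [← hedef]; exact Real.rpow_pos_of_pos hk0 _
  have he1 : e ≤ 1 := by
    rw [← hedef]
    exact Real.rpow_le_one_of_one_le_of_nonpos hkr (by norm_num)
  have he3 : e^3 * k = 1 := by
    rw [← hedef, ← Real.rpow_natCast ((k:ℝ) ^ (-(1/3) : ℝ)) 3, ← Real.rpow_mul hk0.le]
    push_cast
    rw [show (-(1/3) : ℝ) * 3 = -1 by norm_num, Real.rpow_neg_one]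
    field_simp
  have hden : (0:ℝ) < 1 + 5*e := by linarith
  have hmin_nonneg : 0 ≤ min 1 ((n : ℝ) * u / k) := le_min zero_le_one (by positivity)
  constructor
  · -- the main lower bound
    by_cases hbig : (n:ℝ) ≤ (k:ℝ)*(1+2*e)
    · -- use p = 1
      have hpsi1 : psi n k 1 = 1 := by
        rw [psi, if_neg one_ne_zero, inv_one, one_mul]
        have h1 := binTail_le_one n k hkn zero_le_one le_rfl
        have h2 := cheb n k hkn zero_le_one le_rfl (by push_cast; linarith)
        have : (n:ℝ)*1*(1-1)/((n:ℝ)*1+1-k)^2 = 0 := by ring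
        rw [this] at h2
        linarith
      have hfu : u ≤ fnk n k u := by
        have := flow 1 ⟨hu1, le_rfl⟩
        rwa [hpsi1, mul_one] at this
      have : min 1 ((n : ℝ) * u / k) / (1 + 5*e) ≤ u := by
        rw [div_le_iff₀ hden]
        have h1 : min 1 ((n : ℝ) * u / k) ≤ (n:ℝ)*u/k := min_le_right _ _
        have h2 : (n:ℝ)*u/k ≤ u*(1+2*e) := by
          rw [div_le_iff₀ hk0]
          nlinarith
        nlinarith
      linarith
    · push_neg at hbig
      set w : ℝ := (k:ℝ)*(1+2*e) with hwdef
      have hw0 : 0 < w := by positivity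
      have hwk : (k:ℝ) ≤ w := by nlinarith
      have hbeta := key_ineq hepos he1 hkr he3
      -- 1 - beta ≥ (1+2e)/(1+5e) where beta = w/(2ek+1)^2
      have hd2 : (0:ℝ) < (2*e*k+1)^2 := by positivity
      have hbeta' : (1+2*e)/(1+5*e) ≤ 1 - w/(2*e*k+1)^2 := by
        rw [div_le_iff₀ hden, hwdef]
        have : (k:ℝ)*(1+2*e)/(2*e*k+1)^2 * (2*e*k+1)^2 = (k:ℝ)*(1+2*e) := by
          field_simp
        nlinarith [this]
      by_cases hup : u ≤ w / n
      · -- p = w/n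
        set p : ℝ := w / n with hpdef
        have hp1 : p ≤ 1 := by rw [hpdef, div_le_one hn0]; linarith
        have hp0 : 0 < p := by positivity
        have hnp : (n:ℝ) * p = w := by rw [hpdef]; field_simp
        have hch := cheb n k hkn hp0.le hp1 (by
          rw [hnp, hwdef]; nlinarith [mul_pos hepos hk0])
        rw [hnp] at hch
        have hB : 1 - w/(2*e*k+1)^2 ≤ binTail n k p := by
          refine le_trans ?_ hch
          have hnum : w*(1-p) ≤ w := by nlinarith
          have hden2 : (2*e*k+1)^2 ≤ (w+1-k)^2 := by
            have : w+1-(k:ℝ) = 2*e*k+1 := by rw [hwdef]; ring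
            rw [this]
          have : w*(1-p)/(w+1-k)^2 ≤ w/(2*e*k+1)^2 := by
            rw [show w+1-(k:ℝ) = 2*e*k+1 from by rw [hwdef]; ring]
            exact div_le_div_of_nonneg_right hnum hd2.le
          linarith
        have hflow := flow p ⟨hup, hp1⟩
        rw [psi, if_neg (ne_of_gt hp0)] at hflow
        have hgoal : min 1 ((n : ℝ) * u / k) / (1 + 5*e) ≤ u * (p⁻¹ * binTail n k p) := by
          have hq : u * (p⁻¹ * binTail n k p) = (n*u/w) * binTail n k p := by
            rw [hpdef]; field_simp
          rw [hq]
          have h1 : min 1 ((n : ℝ) * u / k) ≤ (n:ℝ)*u/k := min_le_right _ _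
          have hx : (n:ℝ)*u/k / (1+5*e) ≤ (n*u/w) * (1 - w/(2*e*k+1)^2) := by
            have hnu0 : 0 ≤ (n:ℝ)*u := by positivity
            have e1 : (n:ℝ)*u/k / (1+5*e) = (n*u) * (1/((k:ℝ)*(1+5*e))) := by
              field_simp
            have e2 : (n*u/w) * (1 - w/(2*e*k+1)^2) = (n*u) * ((1 - w/(2*e*k+1)^2)/w) := by
              rw [div_mul_eq_mul_div, mul_div_assoc]
            rw [e1, e2]
            apply mul_le_mul_of_nonneg_left _ hnu0
            rw [div_le_div_iff₀ (by positivity) hw0]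
            rw [hwdef]
            have expand : (1 - (k:ℝ)*(1+2*e)/(2*e*k+1)^2) * ((k:ℝ)*(1+5*e))*(2*e*k+1)^2
                = (k:ℝ)*(1+5*e)*((2*e*k+1)^2 - k*(1+2*e)) := by
              field_simp
            nlinarith [hbeta, hk0]
          have hmono : binTail n k p ≥ 1 - w/(2*e*k+1)^2 := hB
          have hw1 : 0 ≤ (n:ℝ)*u/w := by positivity
          calc min 1 ((n : ℝ) * u / k) / (1 + 5*e) ≤ (n:ℝ)*u/k / (1+5*e) := by
                apply div_le_div_of_nonneg_right h1 hden.le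
            _ ≤ (n*u/w) * (1 - w/(2*e*k+1)^2) := hx
            _ ≤ (n*u/w) * binTail n k p := mul_le_mul_of_nonneg_left hB hw1
        linarith
      · -- p = u
        push_neg at hup
        have hu0' : 0 < u := lt_of_le_of_lt (div_nonneg hw0.le hn0.le) hup
        have hnu : w < (n:ℝ)*u := by
          rw [div_lt_iff₀ hn0] at hup; linarith [hup]
        have hch := cheb n k hkn hu0'.le hu1 (by nlinarith)
        have hB : 1 - w/(2*e*k+1)^2 ≤ binTail n k u := by
          refine le_trans ?_ hch
          have h1 : (n:ℝ)*u*(1-u) ≤ (n:ℝ)*u := by nlinarith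
          have hdpos : (0:ℝ) < (n:ℝ)*u+1-k := by nlinarith
          have hfact : ((n:ℝ)*u - w) * ((n:ℝ)*u*w - ((k:ℝ)-1)^2) ≥ 0 := by
            apply mul_nonneg (by linarith)
            nlinarith
          have hrw : w+1-(k:ℝ) = 2*e*k+1 := by rw [hwdef]; ring
          have hmono : (n:ℝ)*u/((n:ℝ)*u+1-k)^2 ≤ w/(2*e*k+1)^2 := by
            rw [div_le_div_iff₀ (by positivity) hd2, ← hrw]
            nlinarith [hfact]
          have : (n:ℝ)*u*(1-u)/((n:ℝ)*u+1-k)^2 ≤ w/(2*e*k+1)^2 := by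
            refine le_trans ?_ hmono
            apply div_le_div_of_nonneg_right h1 (by positivity)
          linarith
        have hflow := flow u ⟨le_rfl, hu1⟩
        rw [psi, if_neg (ne_of_gt hu0')] at hflow
        rw [← mul_assoc, mul_inv_cancel₀ (ne_of_gt hu0'), one_mul] at hflow
        have : min 1 ((n : ℝ) * u / k) / (1 + 5*e) ≤ 1 - w/(2*e*k+1)^2 := by
          have h1 : min 1 ((n : ℝ) * u / k) ≤ 1 := min_le_left _ _
          have h2 : min 1 ((n : ℝ) * u / k) / (1+5*e) ≤ 1/(1+5*e) := by
            apply div_le_div_of_nonneg_right h1 hden.le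
          have h3 : (1:ℝ)/(1+5*e) ≤ (1+2*e)/(1+5*e) := by
            apply div_le_div_of_nonneg_right (by linarith) hden.le
          linarith
        linarith
  constructor
  · exact le_min hfle1 hflecu
  · apply min_le_min le_rfl
    calc cnk n k * u ≤ ((n:ℝ)/k) * u := mul_le_mul_of_nonneg_right hcle hu0
      _ = (n:ℝ)*u/k := by ring
end

section
/- Let n ∈ ℕ with n ≥ 2 and 1 ≤ k ≤ n, and define φ(p) := B_{n,p}({k,…,n}) for p ∈ [0,1]. Then φ is strictly convex on the interval [0, (k-1)/(n-1)] and concave on the interval [(k-1)/(n-1), 1]. -/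
open MeasureTheory

noncomputable def gDer (n k : ℕ) (p : ℝ) : ℝ :=
  (n : ℝ) * ((n-1).choose (k-1) : ℝ) * (p ^ (k-1) * (1 - p) ^ (n-k))

noncomputable def gDer2 (n k : ℕ) (p : ℝ) : ℝ :=
  (n : ℝ) * ((n-1).choose (k-1) : ℝ) *
    (((k-1 : ℕ) : ℝ) * p ^ (k-1-1) * (1 - p) ^ (n-k)
      - ((n-k : ℕ) : ℝ) * p ^ (k-1) * (1 - p) ^ (n-k-1))

lemma binTail_hasDerivAt (n k : ℕ) (hn : 1 ≤ n) (hk1 : 1 ≤ k) (hkn : k ≤ n) (p : ℝ) :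
    HasDerivAt (binTail n k) (gDer n k p) p := by
  have h1p : HasDerivAt (fun q : ℝ => 1 - q) (-1) p := by
    simpa using (hasDerivAt_id p).const_sub (1:ℝ)
  set a : ℕ → ℝ := fun j => (n : ℝ) * ((n-1).choose j : ℝ) * p ^ j * (1 - p) ^ (n-1-j) with ha
  have key : ∀ j ∈ Finset.Icc k n,
      HasDerivAt (fun q : ℝ => (n.choose j : ℝ) * q ^ j * (1-q) ^ (n-j)) (a (j-1) - a j) p := by
    intro j hj
    simp only [Finset.mem_Icc] at hj
    have hj1 : 1 ≤ j := le_trans hk1 hj.1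
    have hd := ((hasDerivAt_pow j p).mul (h1p.pow (n-j))).const_mul ((n.choose j : ℝ))
    have hfun : (fun q : ℝ => (n.choose j : ℝ) * (q ^ j * (1-q) ^ (n-j)))
        = fun q : ℝ => (n.choose j : ℝ) * q ^ j * (1-q) ^ (n-j) := by
      funext q; ring
    simp only [Pi.mul_apply, Pi.pow_apply] at hd
    rw [hfun] at hd
    refine hd.congr_deriv ?_
    have e1 : (n.choose j : ℝ) * (j : ℝ) = (n : ℝ) * ((n-1).choose (j-1) : ℝ) := by
      have h := Nat.add_one_mul_choose_eq (n-1) (j-1)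
      have h1 : n - 1 + 1 = n := by omega
      have h2 : j - 1 + 1 = j := by omega
      simp only [Nat.succ_eq_add_one, h1, h2] at h
      exact_mod_cast h.symm
    have e2 : (n.choose j : ℝ) * ((n-j : ℕ) : ℝ) = (n : ℝ) * ((n-1).choose j : ℝ) := by
      have h := Nat.choose_mul_succ_eq (n-1) j
      rw [Nat.sub_add_cancel hn] at h
      exact_mod_cast h.symm.trans (Nat.mul_comm _ _)
    have exp1 : n - 1 - (j - 1) = n - j := by omega
    have exp2 : n - 1 - j = n - j - 1 := by omega
    simp only [ha, exp1, exp2]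
    rw [← e1, ← e2]
    ring
  have hsum := HasDerivAt.fun_sum key
  have htel : (∑ j ∈ Finset.Icc k n, (a (j-1) - a j)) = a (k-1) - a n := by
    rw [← Finset.Ico_add_one_right_eq_Icc, Finset.sum_Ico_eq_sum_range]
    have hlen : n + 1 - k = n - k + 1 := by omega
    rw [hlen]
    have step : ∀ i ∈ Finset.range (n - k + 1),
        a (k + i - 1) - a (k + i) = a (k + i - 1) - a (k + (i+1) - 1) := by
      intro i _
      congr 2
    rw [Finset.sum_congr rfl step, Finset.sum_range_sub' (fun i => a (k + i - 1))]
    have h3 : k + (n - k + 1) - 1 = n := by omega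
    have h4 : k + 0 - 1 = k - 1 := by omega
    simp only [h3, h4]
  have han : a n = 0 := by
    simp [ha, Nat.choose_eq_zero_of_lt (by omega : n - 1 < n)]
  have hak : a (k-1) = gDer n k p := by
    have : n - 1 - (k - 1) = n - k := by omega
    simp only [ha, this, gDer]
    ring
  rw [htel, han, hak, sub_zero] at hsum
  exact hsum

lemma gDer_hasDerivAt (n k : ℕ) (p : ℝ) : HasDerivAt (gDer n k) (gDer2 n k p) p := by
  have h1p : HasDerivAt (fun q : ℝ => 1 - q) (-1) p := by
    simpa using (hasDerivAt_id p).const_sub (1:ℝ)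
  have hd := ((hasDerivAt_pow (k-1) p).mul (h1p.pow (n-k))).const_mul
    ((n : ℝ) * ((n-1).choose (k-1) : ℝ))
  simp only [Pi.mul_apply, Pi.pow_apply] at hd
  refine hd.congr_deriv ?_
  unfold gDer2
  ring

lemma gDer2_pos (n k : ℕ) (hn : 2 ≤ n) (hk1 : 1 ≤ k) (hkn : k ≤ n) {x : ℝ}
    (hx : x ∈ Set.Ioo 0 (((k:ℝ) - 1) / ((n:ℝ) - 1))) : 0 < gDer2 n k x := by
  obtain ⟨hx0, hxt⟩ := hx
  have hn1 : (0:ℝ) < (n:ℝ) - 1 := by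
    have : (2:ℝ) ≤ (n:ℝ) := by exact_mod_cast hn
    linarith
  have hxk : x * ((n:ℝ) - 1) < (k:ℝ) - 1 := (lt_div_iff₀ hn1).mp hxt
  have hk2 : 2 ≤ k := by
    by_contra h
    have : k = 1 := by omega
    subst this
    simp at hxt
    nlinarith
  have hx1 : x < 1 := by
    have hkn' : (k:ℝ) - 1 ≤ (n:ℝ) - 1 := by
      have : (k:ℝ) ≤ (n:ℝ) := by exact_mod_cast hkn
      linarith
    calc x < ((k:ℝ) - 1) / ((n:ℝ) - 1) := hxt
    _ ≤ 1 := by rw [div_le_one hn1]; linarith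
  have hc : (0:ℝ) < (n : ℝ) * ((n-1).choose (k-1) : ℝ) := by
    have h1 : 0 < (n-1).choose (k-1) := Nat.choose_pos (by omega)
    have : (0:ℝ) < ((n-1).choose (k-1) : ℝ) := by exact_mod_cast h1
    have hn0 : (0:ℝ) < (n:ℝ) := by positivity
    positivity
  have hcast1 : ((k-1 : ℕ) : ℝ) = (k:ℝ) - 1 := by
    rw [Nat.cast_sub hk1, Nat.cast_one]
  rcases eq_or_lt_of_le hkn with rfl | hklt
  · -- k = n
    have : gDer2 k k x = (k : ℝ) * (((k-1).choose (k-1)) : ℝ)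
        * (((k-1:ℕ):ℝ) * x ^ (k-1-1)) := by
      unfold gDer2
      simp [Nat.sub_self]
    rw [this, hcast1]
    have : (0:ℝ) < (k:ℝ) - 1 := by
      have : (2:ℝ) ≤ (k:ℝ) := by exact_mod_cast hk2
      linarith
    positivity
  · have hcast2 : ((n-k : ℕ) : ℝ) = (n:ℝ) - (k:ℝ) := by
      rw [Nat.cast_sub hkn]
    have hsplit1 : x ^ (k-1) = x ^ (k-1-1) * x := by
      rw [← pow_succ]; congr 1; omega
    have hsplit2 : (1-x) ^ (n-k) = (1-x) ^ (n-k-1) * (1-x) := by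
      rw [← pow_succ]; congr 1; omega
    have hfact : gDer2 n k x = (n : ℝ) * ((n-1).choose (k-1) : ℝ)
        * (x ^ (k-1-1) * (1-x) ^ (n-k-1)) * (((k:ℝ) - 1) - ((n:ℝ) - 1) * x) := by
      unfold gDer2
      rw [hsplit1, hsplit2, hcast1, hcast2]
      ring
    rw [hfact]
    have h1x : (0:ℝ) < 1 - x := by linarith
    have hlast : (0:ℝ) < ((k:ℝ) - 1) - ((n:ℝ) - 1) * x := by nlinarith
    positivity

lemma gDer2_nonpos (n k : ℕ) (hn : 2 ≤ n) (hk1 : 1 ≤ k) (hkn : k ≤ n) {x : ℝ}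
    (hx : x ∈ Set.Ioo (((k:ℝ) - 1) / ((n:ℝ) - 1)) 1) : gDer2 n k x ≤ 0 := by
  obtain ⟨hxt, hx1⟩ := hx
  have hn1 : (0:ℝ) < (n:ℝ) - 1 := by
    have : (2:ℝ) ≤ (n:ℝ) := by exact_mod_cast hn
    linarith
  have hxk : (k:ℝ) - 1 < x * ((n:ℝ) - 1) := by
    have := (div_lt_iff₀ hn1).mp hxt
    linarith [this]
  have hx0 : 0 ≤ x := by
    have hkr : (1:ℝ) ≤ (k:ℝ) := by exact_mod_cast hk1
    have ht0 : (0:ℝ) ≤ ((k:ℝ) - 1) / ((n:ℝ) - 1) :=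
      div_nonneg (by linarith) (le_of_lt hn1)
    linarith
  have h1x : (0:ℝ) ≤ 1 - x := by linarith
  have hc : (0:ℝ) ≤ (n : ℝ) * ((n-1).choose (k-1) : ℝ) := by positivity
  have hcast1 : ((k-1 : ℕ) : ℝ) = (k:ℝ) - 1 := by
    rw [Nat.cast_sub hk1, Nat.cast_one]
  rcases eq_or_lt_of_le hkn with rfl | hklt
  · exfalso
    have : ((k:ℝ) - 1) / ((k:ℝ) - 1) = 1 := by
      apply div_self
      have : (2:ℝ) ≤ (k:ℝ) := by exact_mod_cast hn
      linarith
    rw [this] at hxt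
    linarith
  · rcases eq_or_lt_of_le hk1 with rfl | hk2'
    · -- k = 1
      have : gDer2 n 1 x = -((n : ℝ) * ((n-1).choose 0 : ℝ)
          * (((n-1:ℕ):ℝ) * x ^ 0 * (1-x) ^ (n-1-1))) := by
        unfold gDer2
        norm_num
      rw [this]
      simp only [neg_nonpos, pow_zero, mul_one]
      positivity
    · have hk2 : 2 ≤ k := hk2'
      have hcast2 : ((n-k : ℕ) : ℝ) = (n:ℝ) - (k:ℝ) := by
        rw [Nat.cast_sub hkn]
      have hsplit1 : x ^ (k-1) = x ^ (k-1-1) * x := by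
        rw [← pow_succ]; congr 1; omega
      have hsplit2 : (1-x) ^ (n-k) = (1-x) ^ (n-k-1) * (1-x) := by
        rw [← pow_succ]; congr 1; omega
      have hfact : gDer2 n k x = (n : ℝ) * ((n-1).choose (k-1) : ℝ)
          * (x ^ (k-1-1) * (1-x) ^ (n-k-1)) * (((k:ℝ) - 1) - ((n:ℝ) - 1) * x) := by
        unfold gDer2
        rw [hsplit1, hsplit2, hcast1, hcast2]
        ring
      rw [hfact]
      have hlast : ((k:ℝ) - 1) - ((n:ℝ) - 1) * x ≤ 0 := by nlinarith
      have hpos : (0:ℝ) ≤ (n : ℝ) * ((n-1).choose (k-1) : ℝ)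
          * (x ^ (k-1-1) * (1-x) ^ (n-k-1)) := by positivity
      exact mul_nonpos_of_nonneg_of_nonpos hpos hlast

/-- `φ(p) = B_{n,p}({k,…,n})` is strictly convex on `[0,(k-1)/(n-1)]` and concave on
`[(k-1)/(n-1),1]` (for `n ≥ 2`). -/
theorem binTail_convex_concave (n k : ℕ) (hn : 2 ≤ n) (hk1 : 1 ≤ k) (hkn : k ≤ n) :
    StrictConvexOn ℝ (Set.Icc 0 (((k:ℝ) - 1) / ((n:ℝ) - 1))) (binTail n k) ∧
    ConcaveOn ℝ (Set.Icc (((k:ℝ) - 1) / ((n:ℝ) - 1)) 1) (binTail n k) := by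
  have hn1 : 1 ≤ n := by omega
  have hA : ∀ p, HasDerivAt (binTail n k) (gDer n k p) p :=
    binTail_hasDerivAt n k hn1 hk1 hkn
  have hB : ∀ p, HasDerivAt (gDer n k) (gDer2 n k p) p := gDer_hasDerivAt n k
  have hdiff : Differentiable ℝ (binTail n k) := fun p => (hA p).differentiableAt
  have hderiv : deriv (binTail n k) = gDer n k := funext fun p => (hA p).deriv
  have hdiff2 : Differentiable ℝ (gDer n k) := fun p => (hB p).differentiableAt
  have hderiv2 : ∀ p, deriv^[2] (binTail n k) p = gDer2 n k p := by
    intro p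
    show deriv (deriv (binTail n k)) p = _
    rw [hderiv]
    exact (hB p).deriv
  constructor
  · apply strictConvexOn_of_deriv2_pos (convex_Icc _ _) hdiff.continuous.continuousOn
    intro x hx
    rw [interior_Icc] at hx
    rw [hderiv2]
    exact gDer2_pos n k hn hk1 hkn hx
  · apply concaveOn_of_deriv2_nonpos (convex_Icc _ _) hdiff.continuous.continuousOn
      hdiff.differentiableOn (by rw [hderiv]; exact hdiff2.differentiableOn)
    intro x hx
    rw [interior_Icc] at hx
    rw [hderiv2]
    exact gDer2_nonpos n k hn hk1 hkn hx
end

section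
/- Let n ∈ ℕ and 1 ≤ k ≤ n. Then there exists p ∈ [k/n, 1] such that (k/(np)) · B_{n,p}({k,…,n}) ≥ (1 + 5 k^{-1/3})^{-1}. -/
open MeasureTheory

open Finset


lemma sum0 (n : ℕ) (x y : ℝ) :
    ∑ j ∈ range (n+1), (n.choose j : ℝ) * x ^ j * y ^ (n-j) = (x+y)^n := by
  rw [add_pow]; exact Finset.sum_congr rfl fun j _ => by ring

lemma sum1 (n : ℕ) (x y : ℝ) :
    ∑ j ∈ range (n+1), (j : ℝ) * ((n.choose j : ℝ) * x ^ j * y ^ (n-j))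
      = n * x * (x+y)^(n-1) := by
  cases n with
  | zero => simp
  | succ m =>
    rw [Finset.sum_range_succ']
    simp only [Nat.cast_zero, zero_mul, add_zero]
    have h : ∀ i ∈ range (m+1), ((i+1 : ℕ) : ℝ) * (((m+1).choose (i+1) : ℝ) * x ^ (i+1) * y ^ (m+1-(i+1)))
        = (m+1) * x * ((m.choose i : ℝ) * x ^ i * y ^ (m-i)) := by
      intro i _
      have hc := Nat.add_one_mul_choose_eq m i
      have hc' : ((m:ℝ)+1) * (m.choose i : ℝ) = ((m+1).choose (i+1) : ℝ) * ((i:ℝ)+1) := by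
        exact_mod_cast congrArg (Nat.cast (R := ℝ)) hc
      have hsub : m + 1 - (i+1) = m - i := by omega
      rw [hsub]
      push_cast
      linear_combination (-(x^(i+1)*y^(m-i)))*hc'
    rw [Finset.sum_congr rfl h, ← Finset.mul_sum, sum0]
    push_cast
    ring_nf

lemma sum2 (n : ℕ) (x y : ℝ) :
    ∑ j ∈ range (n+1), (j : ℝ) * ((j:ℝ) - 1) * ((n.choose j : ℝ) * x ^ j * y ^ (n-j))
      = n * (n-1) * x^2 * (x+y)^(n-2) := by
  cases n with
  | zero => simp
  | succ m =>
    rw [Finset.sum_range_succ']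
    simp only [Nat.cast_zero, zero_mul, add_zero, zero_sub, mul_zero, zero_mul]
    have h : ∀ i ∈ range (m+1), ((i+1 : ℕ) : ℝ) * (((i+1:ℕ):ℝ) - 1) * (((m+1).choose (i+1) : ℝ) * x ^ (i+1) * y ^ (m+1-(i+1)))
        = (m+1) * x * ((i:ℝ) * ((m.choose i : ℝ) * x ^ i * y ^ (m-i))) := by
      intro i _
      have hc := Nat.add_one_mul_choose_eq m i
      have hc' : ((m:ℝ)+1) * (m.choose i : ℝ) = ((m+1).choose (i+1) : ℝ) * ((i:ℝ)+1) := by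
        exact_mod_cast congrArg (Nat.cast (R := ℝ)) hc
      have hsub : m + 1 - (i+1) = m - i := by omega
      rw [hsub]
      push_cast
      linear_combination (-((i:ℝ) * x^(i+1) * y^(m-i))) * hc'
    rw [Finset.sum_congr rfl h, ← Finset.mul_sum, sum1]
    have hsub2 : m + 1 - 2 = m - 1 := by omega
    rw [hsub2]
    push_cast
    ring

lemma binTail_split (n k : ℕ) (hkn : k ≤ n) (p : ℝ) :
    binTail n k p = ∑ j ∈ range (n+1), (n.choose j : ℝ) * p^j * (1-p)^(n-j)
      - ∑ j ∈ range k, (n.choose j : ℝ) * p^j * (1-p)^(n-j) := by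
  rw [binTail, ← Finset.Ico_add_one_right_eq_Icc, Finset.sum_Ico_eq_sub _ (by omega)]

lemma cheb_s11 (n k : ℕ) (p : ℝ) (hp0 : 0 ≤ p) (hp1 : p ≤ 1) (hkn : k ≤ n)
    (ht : 0 < (n:ℝ)*p - k + 1) :
    1 - ((n:ℝ)*p*(1-p)) / ((n:ℝ)*p - k + 1)^2 ≤ binTail n k p := by
  set t : ℝ := (n:ℝ)*p - k + 1 with hte
  set w : ℕ → ℝ := fun j => (n.choose j : ℝ) * p^j * (1-p)^(n-j) with hwe
  have hw : ∀ j, 0 ≤ w j := fun j =>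
    mul_nonneg (mul_nonneg (Nat.cast_nonneg _) (pow_nonneg hp0 _)) (pow_nonneg (by linarith) _)
  have e0 : ∑ j ∈ range (n+1), w j = 1 := by
    rw [hwe]; rw [sum0]; norm_num
  have e1 : ∑ j ∈ range (n+1), (j:ℝ) * w j = n * p := by
    rw [hwe]; rw [sum1]; norm_num
  have e2 : ∑ j ∈ range (n+1), (j:ℝ) * ((j:ℝ)-1) * w j = n * (n-1) * p^2 := by
    rw [hwe]; rw [sum2]; norm_num
  have key : ∑ j ∈ range (n+1), w j * ((n:ℝ)*p - j)^2 = (n:ℝ)*p*(1-p) := by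
    have expand : ∀ j ∈ range (n+1), w j * ((n:ℝ)*p - j)^2
        = ((n:ℝ)*p)^2 * w j - (2*(n:ℝ)*p - 1) * ((j:ℝ) * w j) + ((j:ℝ)*((j:ℝ)-1)*w j) := by
      intro j _; ring
    rw [Finset.sum_congr rfl expand]
    rw [Finset.sum_add_distrib, Finset.sum_sub_distrib, ← Finset.mul_sum, ← Finset.mul_sum,
      e0, e1, e2]
    ring
  have hsub : ∑ j ∈ range k, w j ≤ ((n:ℝ)*p*(1-p)) / t^2 := by
    have step3 : ∑ j ∈ range (n+1), w j * (((n:ℝ)*p - j)/t)^2 = ((n:ℝ)*p*(1-p)) / t^2 := by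
      rw [← key, Finset.sum_div]
      apply Finset.sum_congr rfl
      intro j _
      rw [div_pow]
      field_simp
    have step1 : ∑ j ∈ range k, w j ≤ ∑ j ∈ range k, w j * (((n:ℝ)*p - j)/t)^2 := by
      apply Finset.sum_le_sum
      intro j hj
      have hjk : (j:ℝ) + 1 ≤ (k:ℝ) := by exact_mod_cast Nat.succ_le_of_lt (Finset.mem_range.mp hj)
      have hx : 1 ≤ ((n:ℝ)*p - j)/t := by
        rw [le_div_iff₀ ht]; simp only [hte]; linarith
      calc w j = w j * 1 := (mul_one _).symm
        _ ≤ w j * (((n:ℝ)*p - j)/t)^2 := by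
            apply mul_le_mul_of_nonneg_left _ (hw j)
            nlinarith
    have step2 : ∑ j ∈ range k, w j * (((n:ℝ)*p - j)/t)^2
        ≤ ∑ j ∈ range (n+1), w j * (((n:ℝ)*p - j)/t)^2 := by
      apply Finset.sum_le_sum_of_subset_of_nonneg
      · exact Finset.range_subset_range.mpr (by omega)
      · intro j _ _
        exact mul_nonneg (hw j) (sq_nonneg _)
    linarith
  have hbt : binTail n k p = 1 - ∑ j ∈ range k, w j := by
    rw [binTail_split n k hkn p, e0]
  rw [hbt]
  linarith

lemma polybound (θ : ℝ) (hθpos : 0 < θ) (h794 : θ ≤ 0.794) :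
    (1+(10/3)*θ) ≤ (1 - (9/100)*θ*(1+(10/3)*θ)) * (1+5*θ) := by
  nlinarith [mul_nonneg hθpos.le (by linarith : (0:ℝ) ≤ 0.794-θ),
    mul_nonneg (sq_nonneg θ) (by linarith : (0:ℝ) ≤ 0.794-θ)]


set_option maxHeartbeats 1000000 in
/-- There is `p ∈ [k/n, 1]` with `(k/(np)) ⋅ B_{n,p}({k,…,n}) ≥ (1 + 5 k^{-1/3})⁻¹`. -/
theorem binTail_lower_bound (n k : ℕ) (hk1 : 1 ≤ k) (hkn : k ≤ n) :
    ∃ p ∈ Set.Icc ((k : ℝ) / n) 1,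
      (1 + 5 * (k : ℝ) ^ (-(1/3) : ℝ))⁻¹ ≤ (k : ℝ) / ((n : ℝ) * p) * binTail n k p := by
  have hn1 : 1 ≤ n := le_trans hk1 hkn
  have hn0 : (0:ℝ) < n := by exact_mod_cast Nat.pos_of_ne_zero (by omega)
  have hk0 : (0:ℝ) < k := by exact_mod_cast hk1
  have hknR : (k:ℝ) ≤ n := by exact_mod_cast hkn
  rcases eq_or_lt_of_le hk1 with hk1' | hk2
  · -- k = 1
    subst hk1'
    refine ⟨1/(n:ℝ), ⟨by norm_num, by rw [div_le_one hn0]; exact_mod_cast hn1⟩, ?_⟩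
    have hnp : (n:ℝ) * (1/(n:ℝ)) = 1 := by field_simp
    rw [hnp]
    simp only [Nat.cast_one, Real.one_rpow, mul_one, div_one, one_div]
    have hB : binTail n 1 ((n:ℝ)⁻¹) = 1 - (1 - (n:ℝ)⁻¹)^n := by
      rw [binTail_split n 1 hkn _, sum0]
      norm_num
    rw [hB]
    have h2 : 0 ≤ 1 - (n:ℝ)⁻¹ := by
      rw [sub_nonneg, inv_le_one_iff₀]
      right; exact_mod_cast hn1
    have h1 : 1 - (n:ℝ)⁻¹ ≤ Real.exp (-(n:ℝ)⁻¹) := by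
      have := Real.add_one_le_exp (-(n:ℝ)⁻¹); linarith
    have h3 : (1 - (n:ℝ)⁻¹)^n ≤ Real.exp (-(n:ℝ)⁻¹)^n := pow_le_pow_left₀ h2 h1 n
    have h4 : Real.exp (-(n:ℝ)⁻¹)^n = Real.exp (-1) := by
      rw [← Real.exp_nat_mul]
      congr 1
      field_simp
    have h5 : Real.exp (-1) ≤ 1/2 := by
      rw [Real.exp_neg]
      rw [inv_le_comm₀ (Real.exp_pos 1) (by norm_num)]
      have := Real.add_one_le_exp 1
      linarith
    have : (1 - (n:ℝ)⁻¹)^n ≤ 1/2 := by rw [h4] at h3; linarith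
    norm_num
    linarith
  · -- k ≥ 2
    generalize hθe : (k:ℝ) ^ (-(1/3) : ℝ) = θ
    have hθpos : 0 < θ := hθe ▸ Real.rpow_pos_of_pos hk0 _
    have hθ3 : θ^3 = (k:ℝ)⁻¹ := by
      rw [← hθe, ← Real.rpow_natCast ((k:ℝ) ^ (-(1/3) : ℝ)) 3, ← Real.rpow_mul (le_of_lt hk0)]
      norm_num
      exact Real.rpow_neg_one _
    have hk2R : (2:ℝ) ≤ k := by exact_mod_cast hk2
    have hθ3' : θ^3 ≤ 1/2 := by
      rw [hθ3, inv_le_comm₀ hk0 (by norm_num)]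
      norm_num; linarith
    have h794 : θ ≤ 0.794 := by nlinarith [sq_nonneg (θ - 0.794), sq_nonneg (θ + 0.794)]
    obtain ⟨δ, hδe⟩ : ∃ d : ℝ, d = (10/3)*θ := ⟨_, rfl⟩
    have hδpos : 0 < δ := by rw [hδe]; positivity
    by_cases hc : (k:ℝ) * (1 + δ) ≤ n
    · -- interior case
      refine ⟨(k:ℝ)*(1+δ)/n, ⟨?_, ?_⟩, ?_⟩
      · have hle : (k:ℝ) ≤ (k:ℝ)*(1+δ) := by nlinarith
        gcongr
      · rw [div_le_one hn0]; exact hc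
      · have hnp : (n:ℝ) * ((k:ℝ)*(1+δ)/n) = (k:ℝ)*(1+δ) := by field_simp
        have hp0 : (0:ℝ) ≤ (k:ℝ)*(1+δ)/n := by positivity
        have hp1 : (k:ℝ)*(1+δ)/n ≤ 1 := by rw [div_le_one hn0]; exact hc
        have ht0 : 0 < (n:ℝ)*((k:ℝ)*(1+δ)/n) - k + 1 := by rw [hnp]; nlinarith
        have hB := cheb_s11 n k ((k:ℝ)*(1+δ)/n) hp0 hp1 hkn ht0
        rw [hnp] at hB
        have hteq : (k:ℝ)*(1+δ) - k + 1 = (k:ℝ)*δ + 1 := by ring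
        rw [hteq] at hB
        have hkδ : 0 < (k:ℝ)*δ := by positivity
        have hdenom : ((k:ℝ)*δ)^2 ≤ ((k:ℝ)*δ + 1)^2 := by nlinarith
        have ha : (0:ℝ) ≤ (k:ℝ)*(1+δ) := by positivity
        have hnum : (k:ℝ)*(1+δ) * (1 - (k:ℝ)*(1+δ)/n) ≤ (k:ℝ)*(1+δ) :=
          mul_le_of_le_one_right ha (by linarith)
        have hnum0 : 0 ≤ (k:ℝ)*(1+δ) * (1 - (k:ℝ)*(1+δ)/n) := mul_nonneg ha (by linarith)
        have hdrop : ((k:ℝ)*(1+δ) * (1 - (k:ℝ)*(1+δ)/n)) / ((k:ℝ)*δ + 1)^2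
            ≤ ((k:ℝ)*(1+δ)) / ((k:ℝ)*δ)^2 :=
          div_le_div₀ (by positivity) hnum (by positivity) hdenom
        have hkθ3 : (k:ℝ)*θ^3 = 1 := by
          rw [hθ3]; field_simp
        have hval : ((k:ℝ)*(1+δ)) / ((k:ℝ)*δ)^2 = (9/100)*θ*(1+δ) := by
          rw [div_eq_iff (ne_of_gt (by positivity : (0:ℝ) < ((k:ℝ)*δ)^2)), hδe]
          linear_combination (-((k:ℝ)*(1+(10/3)*θ))) * hkθ3
        have hBlow : 1 - (9/100)*θ*(1+δ) ≤ binTail n k ((k:ℝ)*(1+δ)/n) := by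
          rw [hval] at hdrop
          linarith
        -- final arithmetic
        rw [hnp]
        have hpos1 : (0:ℝ) < 1 + 5*θ := by linarith
        have hpos2 : (0:ℝ) < 1 + δ := by linarith
        have hpoly : (1+δ) ≤ (1 - (9/100)*θ*(1+δ)) * (1+5*θ) := by
          rw [hδe]
          exact polybound θ hθpos h794
        have hq : (k:ℝ)/((k:ℝ)*(1+δ)) = (1+δ)⁻¹ := by
          rw [← div_div, div_self (ne_of_gt hk0), one_div]
        have hfrac : (1 + 5*θ)⁻¹ ≤ (k:ℝ) / ((k:ℝ)*(1+δ)) * (1 - (9/100)*θ*(1+δ)) := by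
          rw [hq, inv_mul_eq_div, le_div_iff₀ hpos2, inv_mul_le_iff₀ hpos1, mul_comm (1+5*θ)]
          exact hpoly
        have hmono : (k:ℝ) / ((k:ℝ)*(1+δ)) * (1 - (9/100)*θ*(1+δ))
            ≤ (k:ℝ) / ((k:ℝ)*(1+δ)) * binTail n k ((k:ℝ)*(1+δ)/n) :=
          mul_le_mul_of_nonneg_left hBlow (by positivity)
        linarith
    · -- boundary case p = 1
      refine ⟨1, ⟨by rw [div_le_one hn0]; exact hknR, le_refl 1⟩, ?_⟩
      have hB : 1 ≤ binTail n k 1 := by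
        have := cheb_s11 n k 1 (by norm_num) (le_refl 1) hkn (by push_cast; linarith)
        simpa using this
      have hfrac : (1 + 5*θ)⁻¹ ≤ (k:ℝ)/((n:ℝ)*1) := by
        rw [mul_one, inv_eq_one_div, div_le_div_iff₀ (by positivity) hn0]
        push_neg at hc
        nlinarith
      calc (1 + 5*θ)⁻¹ ≤ (k:ℝ)/((n:ℝ)*1) := hfrac
        _ ≤ (k:ℝ)/((n:ℝ)*1) * binTail n k 1 :=
            le_mul_of_one_le_right (by positivity) hB
end
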